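/- arXiv:math/0405137 — 5 statements merged into one kernel-verified Lean document; each statement's English description precedes it below -/
import Mathlib

section
/- Let p be a prime, m ≥ 0 and n ≥ 1 natural numbers, and write n = p^m·q + r with 0 ≤ r < p^m by Euclidean division. Then the p-adic valuations satisfy v_p(n!) = v_p(q!) + q·v_p((p^m)!) + v_p(r!); equivalently, n!/q! = ((p^m)!)^q · r! · u for some p-adic unit u. -/
open Nat

lemma aux_digitsum (p : ℕ) (hp : 1 < p) (m q r : ℕ) (hr : r < p ^ m) :
    (p.digits (p ^ m * q + r)).sum = (p.digits q).sum + (p.digits r).sum := by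
  rcases Nat.eq_zero_or_pos q with rfl | hq
  · simp
  have hlen : (p.digits r).length ≤ m := by
    rcases Nat.eq_zero_or_pos r with rfl | hr0
    · simp
    · rw [Nat.digits_len _ _ hp hr0.ne']
      have := Nat.log_lt_of_lt_pow hr0.ne' hr
      omega
  have h := Nat.digits_append_zeroes_append_digits (b := p) (k := m - (p.digits r).length)
      (m := q) (n := r) hp hq
  rw [Nat.add_sub_cancel' hlen] at h
  have h2 := congrArg List.sum h
  rw [List.sum_append, List.sum_append, List.sum_replicate, smul_zero] at h2
  rw [show p ^ m * q + r = r + p ^ m * q by ring, h2.symm]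
  ring

lemma aux_val (p : ℕ) (hp : p.Prime) (m q r : ℕ) (hr : r < p ^ m) :
    padicValNat p ((p ^ m * q + r) !) =
      padicValNat p (q !) + q * padicValNat p ((p ^ m)!) + padicValNat p (r !) := by
  haveI : Fact p.Prime := ⟨hp⟩
  have hp1 : 1 < p := hp.one_lt
  apply Nat.eq_of_mul_eq_mul_left (show 0 < p - 1 by omega)
  have L := fun n => sub_one_mul_padicValNat_factorial (p := p) n
  have hsum := aux_digitsum p hp1 m q r hr
  have hspm : (p.digits (p ^ m)).sum = 1 := by
    have := Nat.digits_base_pow_mul (b := p) (k := m) (m := 1) hp1 one_pos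
    rw [mul_one] at this
    rw [this]
    simp [Nat.digits_def' hp1, List.sum_replicate, Nat.mod_eq_of_lt hp1, Nat.div_eq_of_lt hp1]
  have h1 := L (p ^ m * q + r)
  have h2 := L q
  have h3 := L (p ^ m)
  have h4 := L r
  rw [hsum] at h1
  rw [hspm] at h3
  have dq := Nat.digit_sum_le p q
  have dr := Nat.digit_sum_le p r
  have key : (p-1) * (padicValNat p (q !) + q * padicValNat p ((p ^ m)!) + padicValNat p (r !))
      = (q - (p.digits q).sum) + q * (p ^ m - 1) + (r - (p.digits r).sum) := by
    rw [Nat.mul_add, Nat.mul_add, h2, h4, ← h3]; ring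
  rw [h1, key]
  have hq1 : q ≤ q * p ^ m := Nat.le_mul_of_pos_right q (pow_pos hp.pos m)
  have : q * (p ^ m - 1) = q * p ^ m - q := by
    rw [Nat.mul_sub, mul_one]
  rw [this]
  have : p ^ m * q = q * p ^ m := mul_comm _ _
  omega

/-- Lemma 5.2.2: writing `n = p^m * q + r` with `0 ≤ r < p^m`, one has
`v_p(n!) = v_p(q!) + q • v_p((p^m)!) + v_p(r!)`; equivalently,
`n! / q! = ((p^m)!)^q * r! * u` for a `p`-adic unit `u`. -/
theorem stmt_12 (p : ℕ) (hp : p.Prime) (m n q r : ℕ) (hn : 1 ≤ n)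
    (hdiv : n = p ^ m * q + r) (hr : r < p ^ m) :
    padicValNat p (n !) =
      padicValNat p (q !) + q * padicValNat p ((p ^ m)!) + padicValNat p (r !) ∧
    ∃ u : ℚ, u ≠ 0 ∧ padicValRat p u = 0 ∧
      (n ! : ℚ) = (q ! : ℚ) * ((p ^ m)! : ℚ) ^ q * (r ! : ℚ) * u := by
  haveI : Fact p.Prime := ⟨hp⟩
  have hval : padicValNat p (n !) =
      padicValNat p (q !) + q * padicValNat p ((p ^ m)!) + padicValNat p (r !) := by
    subst hdiv; exact aux_val p hp m q r hr
  refine ⟨hval, ?_⟩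
  set D : ℕ := q ! * ((p ^ m)!) ^ q * r ! with hD
  have hD0 : D ≠ 0 := by positivity
  have hvD : padicValNat p D = padicValNat p (q !) + q * padicValNat p ((p ^ m)!)
      + padicValNat p (r !) := by
    rw [hD, padicValNat.mul (by positivity) (factorial_ne_zero r),
      padicValNat.mul (factorial_ne_zero q) (by positivity),
      padicValNat.pow _ _]
  refine ⟨(n ! : ℚ) / (D : ℚ), ?_, ?_, ?_⟩
  · have : (n ! : ℚ) ≠ 0 := by exact_mod_cast factorial_ne_zero n
    have : (D : ℚ) ≠ 0 := by exact_mod_cast hD0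
    positivity
  · rw [padicValRat.div (p := p) (by exact_mod_cast factorial_ne_zero n) (by exact_mod_cast hD0),
      padicValRat.of_nat, padicValRat.of_nat, hval, hvD]
    ring
  · have hDq : (D : ℚ) ≠ 0 := by exact_mod_cast hD0
    field_simp [hD]
    rw [hD]; push_cast; ring
end

section
/- Let A be a p-torsion free, p-adically separated ℤ_p-algebra with p-adic completion Â, and let B be a subring of ℚ_p ⊗_{ℤ_p} A containing A. Then: (i) the sum B + Â (taken inside ℚ_p ⊗_{ℤ_p} Â) is a subring of ℚ_p ⊗_{ℤ_p} Â, equal to the image of the multiplication map Â ⊗_A B → ℚ_p ⊗_{ℤ_p} Â; and (ii) the inclusion B → B + Â induces an isomorphism on p-adic completions. -/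
open scoped TensorProduct

set_option maxHeartbeats 1000000

lemma padic_clear (p : ℕ) [Fact p.Prime] (q : ℚ_[p]) :
    ∃ (k : ℕ) (u : ℤ_[p]), (u : ℚ_[p]) = (p : ℚ_[p]) ^ k * q := by
  have hp1 : (1 : ℝ) < p := by exact_mod_cast (Fact.out : p.Prime).one_lt
  obtain ⟨k, hk⟩ := pow_unbounded_of_one_lt ‖q‖ hp1
  have hnorm : ‖(p : ℚ_[p]) ^ k * q‖ ≤ 1 := by
    rw [norm_mul, norm_pow, Padic.norm_p, inv_pow, inv_mul_le_iff₀ (by positivity), mul_one]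
    exact hk.le
  exact ⟨k, ⟨_, hnorm⟩, rfl⟩

lemma smul_cancel' {p : ℕ} [Fact p.Prime] {M : Type*} [AddCommMonoid M] [Module ℚ_[p] M]
    {c : ℚ_[p]} (hc : c ≠ 0) {x y : M} (h : c • x = c • y) : x = y := by
  have := congrArg (fun z => c⁻¹ • z) h
  simpa [smul_smul, inv_mul_cancel₀ hc] using this

lemma exists_clear (p : ℕ) [Fact p.Prime] {C : Type*} [AddCommGroup C] [Module ℤ_[p] C]
    (x : ℚ_[p] ⊗[ℤ_[p]] C) :
    ∃ (k : ℕ) (a : C), ((p : ℚ_[p]) ^ k) • x = (1 : ℚ_[p]) ⊗ₜ[ℤ_[p]] a := by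
  induction x with
  | zero => exact ⟨0, 0, by simp [TensorProduct.tmul_zero]⟩
  | tmul q m =>
    obtain ⟨k, u, hu⟩ := padic_clear p q
    refine ⟨k, u • m, ?_⟩
    rw [TensorProduct.smul_tmul', smul_eq_mul, ← hu, ← TensorProduct.smul_tmul]
    congr 1
    simp [Algebra.smul_def, PadicInt.algebraMap_apply]
  | add x y hx hy =>
    obtain ⟨k₁, a₁, h₁⟩ := hx
    obtain ⟨k₂, a₂, h₂⟩ := hy
    refine ⟨k₁ + k₂, (p : ℤ_[p]) ^ k₂ • a₁ + (p : ℤ_[p]) ^ k₁ • a₂, ?_⟩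
    have key : ∀ (j : ℕ) (a : C), ((p:ℚ_[p])^j) • ((1:ℚ_[p]) ⊗ₜ[ℤ_[p]] a)
        = (1:ℚ_[p]) ⊗ₜ[ℤ_[p]] ((p : ℤ_[p])^j • a) := by
      intro j a
      have hcast : ((p:ℚ_[p])^j) = algebraMap ℤ_[p] ℚ_[p] ((p:ℤ_[p])^j) := by
        rw [map_pow, map_natCast]
      rw [hcast, algebraMap_smul, TensorProduct.smul_tmul', TensorProduct.smul_tmul]
    have e1 : ((p : ℚ_[p]) ^ (k₁ + k₂)) • x = ((p:ℚ_[p])^k₂) • ((1:ℚ_[p]) ⊗ₜ[ℤ_[p]] a₁) := by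
      rw [pow_add, mul_comm, mul_smul, h₁]
    have e2 : ((p : ℚ_[p]) ^ (k₁ + k₂)) • y = ((p:ℚ_[p])^k₁) • ((1:ℚ_[p]) ⊗ₜ[ℤ_[p]] a₂) := by
      rw [pow_add, mul_smul, h₂]
    rw [smul_add, e1, e2, key, key, TensorProduct.tmul_add]

lemma tensor_inj (p : ℕ) [Fact p.Prime] {M : Type*} [AddCommGroup M] [Module ℤ_[p] M]
    (htf : ∀ m : M, (p : ℤ_[p]) • m = 0 → m = 0)
    (m : M) (h : (1 : ℚ_[p]) ⊗ₜ[ℤ_[p]] m = 0) : m = 0 := by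
  have hbc : IsLocalizedModule (nonZeroDivisors ℤ_[p]) (TensorProduct.mk ℤ_[p] ℚ_[p] M 1) :=
    (isLocalizedModule_iff_isBaseChange (nonZeroDivisors ℤ_[p]) ℚ_[p] _).mpr
      (TensorProduct.isBaseChange ℤ_[p] M ℚ_[p])
  obtain ⟨s, hs⟩ := (IsLocalizedModule.eq_zero_iff (nonZeroDivisors ℤ_[p])
    (TensorProduct.mk ℤ_[p] ℚ_[p] M 1)).mp h
  have hsne : (s : ℤ_[p]) ≠ 0 := nonZeroDivisors.ne_zero s.2
  have hpk : ∀ (j : ℕ) (m : M), ((p : ℤ_[p]) ^ j) • m = 0 → m = 0 := by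
    intro j
    induction j with
    | zero => intro m hm; simpa using hm
    | succ j ih =>
      intro m hm
      rw [pow_succ, mul_smul] at hm
      exact htf m (ih _ hm)
  have hspec := PadicInt.unitCoeff_spec hsne
  have h1 : ((PadicInt.unitCoeff hsne : ℤ_[p])) •
      (((p : ℤ_[p]) ^ (s : ℤ_[p]).valuation) • m) = 0 := by
    rw [← mul_smul, ← hspec]; exact hs
  have h2 : ((p : ℤ_[p]) ^ (s : ℤ_[p]).valuation) • m = 0 := by
    have h4 := congrArg (fun z => (((PadicInt.unitCoeff hsne)⁻¹ : ℤ_[p]ˣ) : ℤ_[p]) • z) h1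
    simpa [smul_smul, Units.inv_mul] using h4
  exact hpk _ _ h2

lemma cast_pow_mul_eq_smul (p : ℕ) [Fact p.Prime] {C : Type*} [Ring C] [Algebra ℤ_[p] C]
    (k : ℕ) (x : ℚ_[p] ⊗[ℤ_[p]] C) :
    (p : ℚ_[p] ⊗[ℤ_[p]] C) ^ k * x = ((p : ℚ_[p]) ^ k) • x := by
  rw [Algebra.smul_def, map_pow, map_natCast]

lemma tmul_cast_pow (p : ℕ) [Fact p.Prime] {C : Type*} [Ring C] [Algebra ℤ_[p] C]
    (j : ℕ) (a : C) :
    (1 : ℚ_[p]) ⊗ₜ[ℤ_[p]] ((p : C) ^ j * a)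
      = (p : ℚ_[p] ⊗[ℤ_[p]] C) ^ j * ((1 : ℚ_[p]) ⊗ₜ[ℤ_[p]] a) := by
  have h1 : (p : C) ^ j * a = ((p : ℤ_[p]) ^ j) • a := by
    rw [Algebra.smul_def, map_pow, map_natCast]
  have hcast : ((p:ℚ_[p])^j) = algebraMap ℤ_[p] ℚ_[p] ((p:ℤ_[p])^j) := by
    rw [map_pow, map_natCast]
  rw [h1, cast_pow_mul_eq_smul, hcast, algebraMap_smul, TensorProduct.smul_tmul',
    TensorProduct.smul_tmul]


/-- `ι : A → Â` exhibits `Â` as the `p`-adic completion of `A`: `Â` is `p`-adically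
separated and complete, the image of `A` is `p`-adically dense, and `ι` induces injections
`A/pⁿA → Â/pⁿÂ` for every `n` (so that `A/pⁿA ≅ Â/pⁿÂ`). -/
def IsPAdicCompletionHom (p : ℕ) {A Ahat : Type*} [Ring A] [Ring Ahat]
    (ι : A →+* Ahat) : Prop :=
  (∀ x : Ahat, (∀ n : ℕ, ∃ y : Ahat, x = (p : Ahat) ^ n * y) → x = 0) ∧
  (∀ x : ℕ → Ahat, (∀ n : ℕ, ∃ y : Ahat, x (n + 1) - x n = (p : Ahat) ^ n * y) →
    ∃ z : Ahat, ∀ n : ℕ, ∃ y : Ahat, z - x n = (p : Ahat) ^ n * y) ∧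
  (∀ (n : ℕ) (z : Ahat), ∃ (a : A) (y : Ahat), z - ι a = (p : Ahat) ^ n * y) ∧
  (∀ (n : ℕ) (a : A), (∃ y : Ahat, ι a = (p : Ahat) ^ n * y) →
    ∃ b : A, a = (p : A) ^ n * b)

/-- Corollary 5.3.6 and Lemma 5.3.8: let `A` be a `p`-torsion free, `p`-adically separated
(not necessarily commutative) `ℤ_[p]`-algebra with `p`-adic completion `Â`, and let `B` be a
subring of `ℚ_[p] ⊗[ℤ_[p]] A` containing `A`.  Then, inside `ℚ_[p] ⊗[ℤ_[p]] Â`: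
(i) the sum `B + Â` is a subring, equal to the image of the multiplication map
`Â ⊗_A B → ℚ_[p] ⊗[ℤ_[p]] Â` (i.e. the additive subgroup generated by products `ŷ·b`), and
(ii) the inclusion `B → B + Â` induces an isomorphism on `p`-adic completions (it is
bijective modulo `pⁿ` for every `n`). -/
theorem stmt_15 (p : ℕ) [hp : Fact p.Prime]
    (A : Type*) [Ring A] [Algebra ℤ_[p] A]
    (Ahat : Type*) [Ring Ahat] [Algebra ℤ_[p] Ahat]
    (ι : A →ₐ[ℤ_[p]] Ahat) (hι : IsPAdicCompletionHom p ι.toRingHom)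
    (htf : ∀ a : A, (p : A) * a = 0 → a = 0)
    (hsep : ∀ a : A, (∀ n : ℕ, ∃ b : A, a = (p : A) ^ n * b) → a = 0)
    (B : Subring (ℚ_[p] ⊗[ℤ_[p]] A))
    (hAB : ∀ a : A,
      ((Algebra.TensorProduct.includeRight : A →ₐ[ℤ_[p]] ℚ_[p] ⊗[ℤ_[p]] A) a) ∈ B) :
    let Φ : ℚ_[p] ⊗[ℤ_[p]] A →ₐ[ℤ_[p]] ℚ_[p] ⊗[ℤ_[p]] Ahat :=
      Algebra.TensorProduct.map (AlgHom.id ℤ_[p] ℚ_[p]) ι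
    let ir : Ahat →ₐ[ℤ_[p]] ℚ_[p] ⊗[ℤ_[p]] Ahat := Algebra.TensorProduct.includeRight
    let T : Set (ℚ_[p] ⊗[ℤ_[p]] Ahat) := {x | ∃ b ∈ B, ∃ y : Ahat, x = Φ b + ir y}
    ((∃ S : Subring (ℚ_[p] ⊗[ℤ_[p]] Ahat), (S : Set (ℚ_[p] ⊗[ℤ_[p]] Ahat)) = T) ∧
      T = (AddSubgroup.closure {z : ℚ_[p] ⊗[ℤ_[p]] Ahat |
            ∃ (y : Ahat) (b : ℚ_[p] ⊗[ℤ_[p]] A), b ∈ B ∧ z = ir y * Φ b} :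
          AddSubgroup (ℚ_[p] ⊗[ℤ_[p]] Ahat))) ∧
    ∀ n : ℕ,
      (∀ x ∈ T, ∃ b ∈ B, ∃ t ∈ T,
        x - Φ b = (p : ℚ_[p] ⊗[ℤ_[p]] Ahat) ^ n * t) ∧
      (∀ b ∈ B, (∃ t ∈ T, Φ b = (p : ℚ_[p] ⊗[ℤ_[p]] Ahat) ^ n * t) →
        ∃ b' ∈ B, b = (p : ℚ_[p] ⊗[ℤ_[p]] A) ^ n * b') := by
  obtain ⟨hsepA, hcomp, hdens0, hinj0⟩ := hι
  intro Φ ir T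
  have hdens : ∀ (n : ℕ) (z : Ahat), ∃ (a : A) (y : Ahat),
      z - ι a = (p : Ahat) ^ n * y := hdens0
  have hinj : ∀ (n : ℕ) (a : A), (∃ y : Ahat, ι a = (p : Ahat) ^ n * y) →
      ∃ b : A, a = (p : A) ^ n * b := hinj0
  have hdens' : ∀ (n : ℕ) (y : Ahat), ∃ (c : A) (z : Ahat),
      y = (p : Ahat) ^ n * z + ι c := by
    intro n y
    obtain ⟨c, z, h⟩ := hdens n y
    exact ⟨c, z, by rw [← h]; abel⟩
  -- torsion-freeness of Ahat
  have hAhat_tf : ∀ y : Ahat, (p : Ahat) * y = 0 → y = 0 := by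
    intro y hy
    apply hsepA
    intro n
    obtain ⟨c, z, hz⟩ := hdens' n y
    have hic : ι c = y - (p : Ahat) ^ n * z := by rw [hz]; abel
    have hpc : ι ((p : A) * c) = (p : Ahat) ^ (n + 1) * (-z) := by
      rw [map_mul, map_natCast, hic, mul_sub, hy, zero_sub, pow_succ', mul_neg, mul_assoc]
    obtain ⟨c', hc'⟩ := hinj (n + 1) ((p : A) * c) ⟨-z, hpc⟩
    have hc'' : c = (p : A) ^ n * c' := by
      have h0 : (p : A) * (c - (p : A) ^ n * c') = 0 := by
        rw [mul_sub, ← mul_assoc, ← pow_succ', ← hc', sub_self]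
      have := htf _ h0
      rwa [sub_eq_zero] at this
    refine ⟨ι c' + z, ?_⟩
    rw [hz, hc'', map_mul, map_pow, map_natCast, mul_add, add_comm]
  have htfA : ∀ a : A, (p : ℤ_[p]) • a = 0 → a = 0 := by
    intro a h; exact htf a (by rwa [Algebra.smul_def, map_natCast] at h)
  have htfAhat : ∀ y : Ahat, (p : ℤ_[p]) • y = 0 → y = 0 := by
    intro y h; exact hAhat_tf y (by rwa [Algebra.smul_def, map_natCast] at h)
  -- basic computations
  have hirdef : ∀ y : Ahat, ir y = (1 : ℚ_[p]) ⊗ₜ[ℤ_[p]] y := fun y => rfl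
  have hΦj : ∀ a : A, Φ ((1 : ℚ_[p]) ⊗ₜ[ℤ_[p]] a) = ir (ι a) := by
    intro a
    simp only [Φ, ir, Algebra.TensorProduct.map_tmul, AlgHom.coe_id, id_eq,
      Algebra.TensorProduct.includeRight_apply]
  have hirinj : ∀ y : Ahat, ir y = 0 → y = 0 := by
    intro y h
    exact tensor_inj p htfAhat y (by rwa [hirdef] at h)
  have hclearB : ∀ x : ℚ_[p] ⊗[ℤ_[p]] A, ∃ (k : ℕ) (a : A),
      (p : ℚ_[p] ⊗[ℤ_[p]] A) ^ k * x = (1 : ℚ_[p]) ⊗ₜ[ℤ_[p]] a := by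
    intro x
    obtain ⟨k, a, h⟩ := exists_clear p x
    exact ⟨k, a, by rw [cast_pow_mul_eq_smul]; exact h⟩
  -- key multiplication lemmas
  have hkeyL : ∀ (y : Ahat) (b : ℚ_[p] ⊗[ℤ_[p]] A), b ∈ B →
      ∃ b' ∈ B, ∃ z' : Ahat, ir y * Φ b = Φ b' + ir z' := by
    intro y b hb
    obtain ⟨k, a, hka⟩ := hclearB b
    obtain ⟨c, z, hz⟩ := hdens' k y
    have hΦk : (p : ℚ_[p] ⊗[ℤ_[p]] Ahat) ^ k * Φ b = ir (ι a) := by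
      rw [← hΦj a, ← hka, map_mul, map_pow, map_natCast]
    refine ⟨(1 : ℚ_[p]) ⊗ₜ[ℤ_[p]] c * b, B.mul_mem (hAB c) hb, z * ι a, ?_⟩
    have t1 : ir ((p : Ahat) ^ k * z) * Φ b = ir (z * ι a) := by
      rw [map_mul, map_pow, map_natCast, ((Nat.cast_commute p (ir z)).pow_left k).eq,
        mul_assoc, hΦk, ← map_mul]
    have t2 : ir (ι c) * Φ b = Φ ((1 : ℚ_[p]) ⊗ₜ[ℤ_[p]] c * b) := by
      rw [← hΦj c, ← map_mul]
    rw [hz, map_add, add_mul, t1, t2, add_comm]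
  have hkeyR : ∀ (b : ℚ_[p] ⊗[ℤ_[p]] A), b ∈ B → ∀ (y : Ahat),
      ∃ b' ∈ B, ∃ z' : Ahat, Φ b * ir y = Φ b' + ir z' := by
    intro b hb y
    obtain ⟨k, a, hka⟩ := hclearB b
    obtain ⟨c, z, hz⟩ := hdens' k y
    have hΦk : (p : ℚ_[p] ⊗[ℤ_[p]] Ahat) ^ k * Φ b = ir (ι a) := by
      rw [← hΦj a, ← hka, map_mul, map_pow, map_natCast]
    refine ⟨b * ((1 : ℚ_[p]) ⊗ₜ[ℤ_[p]] c), B.mul_mem hb (hAB c), ι a * z, ?_⟩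
    have t1 : Φ b * ir ((p : Ahat) ^ k * z) = ir (ι a * z) := by
      rw [map_mul, map_pow, map_natCast, ← mul_assoc,
        ← ((Nat.cast_commute p (Φ b)).pow_left k).eq, hΦk, ← map_mul]
    have t2 : Φ b * ir (ι c) = Φ (b * ((1 : ℚ_[p]) ⊗ₜ[ℤ_[p]] c)) := by
      rw [← hΦj c, ← map_mul]
    rw [hz, map_add, mul_add, t1, t2, add_comm]
  -- membership helpers
  have hmemT : ∀ (b : ℚ_[p] ⊗[ℤ_[p]] A), b ∈ B → ∀ (y : Ahat), Φ b + ir y ∈ T := by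
    intro b hb y; exact ⟨b, hb, y, rfl⟩
  have haddT : ∀ x ∈ T, ∀ x' ∈ T, x + x' ∈ T := by
    rintro x ⟨b, hb, y, rfl⟩ x' ⟨b', hb', y', rfl⟩
    refine ⟨b + b', B.add_mem hb hb', y + y', ?_⟩
    rw [map_add, map_add]; abel
  have hmulT : ∀ x ∈ T, ∀ x' ∈ T, x * x' ∈ T := by
    rintro x ⟨b, hb, y, rfl⟩ x' ⟨b', hb', y', rfl⟩
    have hexp : (Φ b + ir y) * (Φ b' + ir y')
        = (Φ (b * b') + ir (y * y')) + (Φ b * ir y' + ir y * Φ b') := by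
      rw [map_mul, map_mul]; noncomm_ring
    rw [hexp]
    obtain ⟨c1, hc1, w1, hw1⟩ := hkeyR b hb y'
    obtain ⟨c2, hc2, w2, hw2⟩ := hkeyL y b' hb'
    rw [hw1, hw2]
    exact haddT _ (hmemT _ (B.mul_mem hb hb') _) _
      (haddT _ (hmemT _ hc1 _) _ (hmemT _ hc2 _))
  -- the subring
  have hG : {z : ℚ_[p] ⊗[ℤ_[p]] Ahat |
      ∃ (y : Ahat) (b : ℚ_[p] ⊗[ℤ_[p]] A), b ∈ B ∧ z = ir y * Φ b} ⊆ T := by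
    rintro z ⟨y, b, hb, rfl⟩
    obtain ⟨b', hb', z', hEq⟩ := hkeyL y b hb
    exact hEq ▸ hmemT b' hb' z'
  have hS : ∃ S : Subring (ℚ_[p] ⊗[ℤ_[p]] Ahat),
      (S : Set (ℚ_[p] ⊗[ℤ_[p]] Ahat)) = T := by
    refine ⟨{ carrier := T
              one_mem' := by
                have := hmemT 1 B.one_mem 0
                rwa [map_one, map_zero, add_zero] at this
              mul_mem' := fun hx hy => hmulT _ hx _ hy
              zero_mem' := by
                have := hmemT 0 B.zero_mem 0
                rwa [map_zero, map_zero, add_zero] at this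
              add_mem' := fun hx hy => haddT _ hx _ hy
              neg_mem' := by
                rintro x ⟨b, hb, y, rfl⟩
                refine ⟨-b, B.neg_mem hb, -y, ?_⟩
                rw [map_neg, map_neg]; abel }, rfl⟩
  obtain ⟨S, hST⟩ := hS
  refine ⟨⟨⟨S, hST⟩, ?_⟩, ?_⟩
  · -- T = closure of products
    apply Set.Subset.antisymm
    · rintro x ⟨b, hb, y, rfl⟩
      have h1 : Φ b ∈ AddSubgroup.closure {z : ℚ_[p] ⊗[ℤ_[p]] Ahat |
          ∃ (y : Ahat) (b : ℚ_[p] ⊗[ℤ_[p]] A), b ∈ B ∧ z = ir y * Φ b} :=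
        AddSubgroup.subset_closure ⟨1, b, hb, by rw [map_one, one_mul]⟩
      have h2 : ir y ∈ AddSubgroup.closure {z : ℚ_[p] ⊗[ℤ_[p]] Ahat |
          ∃ (y : Ahat) (b : ℚ_[p] ⊗[ℤ_[p]] A), b ∈ B ∧ z = ir y * Φ b} :=
        AddSubgroup.subset_closure ⟨y, 1, B.one_mem, by rw [map_one, mul_one]⟩
      exact AddSubgroup.add_mem _ h1 h2
    · intro x hx
      have hle : AddSubgroup.closure {z : ℚ_[p] ⊗[ℤ_[p]] Ahat |
          ∃ (y : Ahat) (b : ℚ_[p] ⊗[ℤ_[p]] A), b ∈ B ∧ z = ir y * Φ b}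
          ≤ S.toAddSubgroup := by
        apply AddSubgroup.closure_le _ |>.mpr
        intro z hz
        have hzT : z ∈ T := hG hz
        show z ∈ S
        rw [← SetLike.mem_coe, hST]
        exact hzT
      have hxS : x ∈ S.toAddSubgroup := hle (SetLike.mem_coe.mp hx)
      rw [← hST]
      exact hxS
  · intro n
    constructor
    · rintro x ⟨b₀, hb₀, y, rfl⟩
      obtain ⟨c, z, hz⟩ := hdens' n y
      refine ⟨b₀ + (1:ℚ_[p]) ⊗ₜ[ℤ_[p]] c, B.add_mem hb₀ (hAB c), ir z,
        ⟨0, B.zero_mem, z, by rw [map_zero, zero_add]⟩, ?_⟩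
      have hsub : y - ι c = (p : Ahat) ^ n * z := by rw [hz]; abel
      calc Φ b₀ + ir y - Φ (b₀ + (1:ℚ_[p]) ⊗ₜ[ℤ_[p]] c) = ir y - ir (ι c) := by
            rw [map_add, hΦj]; abel
        _ = ir (y - ι c) := (map_sub _ _ _).symm
        _ = (p : ℚ_[p] ⊗[ℤ_[p]] Ahat) ^ n * ir z := by
            rw [hsub, map_mul, map_pow, map_natCast]
    · rintro b hb ⟨t, ht, hbt⟩
      obtain ⟨b₀, hb₀, y, rfl⟩ := ht
      have hd : Φ (b - (p : ℚ_[p] ⊗[ℤ_[p]] A) ^ n * b₀)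
          = (p : ℚ_[p] ⊗[ℤ_[p]] Ahat) ^ n * ir y := by
        rw [map_sub, map_mul, map_pow, map_natCast, hbt, mul_add]
        abel
      obtain ⟨k, a, hka⟩ := hclearB (b - (p : ℚ_[p] ⊗[ℤ_[p]] A) ^ n * b₀)
      have hira : ir (ι a) = ir ((p : Ahat) ^ (k + n) * y) := by
        rw [← hΦj a, ← hka, map_mul, map_pow, map_natCast, hd, map_mul, map_pow, map_natCast,
          ← mul_assoc, ← pow_add]
      have hia : ι a = (p : Ahat) ^ (k + n) * y := by
        have h0 : ir (ι a - (p : Ahat) ^ (k + n) * y) = 0 := by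
          rw [map_sub, hira, sub_self]
        have := hirinj _ h0
        rwa [sub_eq_zero] at this
      obtain ⟨a', ha'⟩ := hinj (k + n) a ⟨y, hia⟩
      have hstep : (p : ℚ_[p] ⊗[ℤ_[p]] A) ^ k * (b - (p : ℚ_[p] ⊗[ℤ_[p]] A) ^ n * b₀)
          = (p : ℚ_[p] ⊗[ℤ_[p]] A) ^ k *
            ((p : ℚ_[p] ⊗[ℤ_[p]] A) ^ n * ((1:ℚ_[p]) ⊗ₜ[ℤ_[p]] a')) := by
        rw [hka, ha', tmul_cast_pow, pow_add, mul_assoc]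
      have hcancel : b - (p : ℚ_[p] ⊗[ℤ_[p]] A) ^ n * b₀
          = (p : ℚ_[p] ⊗[ℤ_[p]] A) ^ n * ((1:ℚ_[p]) ⊗ₜ[ℤ_[p]] a') := by
        rw [cast_pow_mul_eq_smul, cast_pow_mul_eq_smul p k] at hstep
        exact smul_cancel' (pow_ne_zero k (Nat.cast_ne_zero.mpr hp.out.ne_zero)) hstep
      refine ⟨(1:ℚ_[p]) ⊗ₜ[ℤ_[p]] a' + b₀, B.add_mem (hAB a') hb₀, ?_⟩
      rw [mul_add, ← hcancel]
      abel
end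

section
/- Let K be a field of characteristic zero, A an associative K-algebra, and B ⊇ A an extension generated as a ring by A together with a single element x such that: x^n = a for some unit a ∈ A^× and some n ≥ 1, and x normalizes A (xAx⁻¹ = A). If C is an extension of B that is flat as a left (respectively right) A-module, then C is flat as a left (respectively right) B-module. -/
/-- The equational criterion for flatness: `C` is flat as a left module over `R` (acting
through the ring homomorphism `ρ`) iff every linear relation `∑ ρ(aᵢ) xᵢ = 0` in `C` can be
trivialised. -/
def IsLeftFlatRingHom {R C : Type*} [Ring R] [Ring C] (ρ : R →+* C) : Prop :=
  ∀ (k : ℕ) (a : Fin k → R) (x : Fin k → C),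
    (∑ i, ρ (a i) * x i) = 0 →
      ∃ (l : ℕ) (b : Fin k → Fin l → R) (y : Fin l → C),
        (∀ i, x i = ∑ j, ρ (b i j) * y j) ∧ ∀ j, (∑ i, a i * b i j) = 0

/-- The equational criterion for flatness of `C` as a right module over `R` (acting through
`ρ`). -/
def IsRightFlatRingHom {R C : Type*} [Ring R] [Ring C] (ρ : R →+* C) : Prop :=
  ∀ (k : ℕ) (a : Fin k → R) (x : Fin k → C),
    (∑ i, x i * ρ (a i)) = 0 →
      ∃ (l : ℕ) (b : Fin l → Fin k → R) (y : Fin l → C),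
        (∀ i, x i = ∑ j, y j * ρ (b j i)) ∧ ∀ j, (∑ i, b j i * a i) = 0

section multi
variable {R C : Type*} [Ring R] [Ring C] (ρ : R →+* C)

lemma singleLeft' (h : IsLeftFlatRingHom ρ) (ι : Type) [Fintype ι] (a : ι → R) (x : ι → C)
    (hrel : ∑ i, ρ (a i) * x i = 0) :
    ∃ (l : ℕ) (b : ι → Fin l → R) (y : Fin l → C),
      (∀ i, x i = ∑ j, ρ (b i j) * y j) ∧ ∀ j, (∑ i, a i * b i j) = 0 := by
  classical
  let e : Fin (Fintype.card ι) ≃ ι := (Fintype.equivFin ι).symm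
  obtain ⟨l, b, y, hxy, hab⟩ := h (Fintype.card ι) (a ∘ e) (x ∘ e)
    (by rw [← hrel]; exact Fintype.sum_equiv e _ _ (fun t => rfl))
  refine ⟨l, fun i j => b (e.symm i) j, y, fun i => ?_, fun j => ?_⟩
  · have := hxy (e.symm i); simpa using this
  · rw [← hab j]
    exact Fintype.sum_equiv e.symm _ _ (fun i => by simp)

lemma singleRight' (h : IsRightFlatRingHom ρ) (ι : Type) [Fintype ι] (a : ι → R) (x : ι → C)
    (hrel : ∑ i, x i * ρ (a i) = 0) :
    ∃ (l : ℕ) (b : Fin l → ι → R) (y : Fin l → C),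
      (∀ i, x i = ∑ j, y j * ρ (b j i)) ∧ ∀ j, (∑ i, b j i * a i) = 0 := by
  classical
  let e : Fin (Fintype.card ι) ≃ ι := (Fintype.equivFin ι).symm
  obtain ⟨l, b, y, hxy, hab⟩ := h (Fintype.card ι) (a ∘ e) (x ∘ e)
    (by rw [← hrel]; exact Fintype.sum_equiv e _ _ (fun t => rfl))
  refine ⟨l, fun j i => b j (e.symm i), y, fun i => ?_, fun j => ?_⟩
  · have := hxy (e.symm i); simpa using this
  · rw [← hab j]
    exact Fintype.sum_equiv e.symm _ _ (fun i => by simp)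

lemma multiLeft (h : IsLeftFlatRingHom ρ) :
    ∀ (m : ℕ) (ι : Type) [Fintype ι] [DecidableEq ι] (a : Fin m → ι → R) (x : ι → C),
      (∀ t, ∑ i, ρ (a t i) * x i = 0) →
      ∃ (l : ℕ) (b : ι → Fin l → R) (y : Fin l → C),
        (∀ i, x i = ∑ j, ρ (b i j) * y j) ∧ ∀ t j, (∑ i, a t i * b i j) = 0 := by
  intro m
  induction m with
  | zero =>
    intro ι _ _ a x _
    refine ⟨Fintype.card ι, fun i j => if (Fintype.equivFin ι).symm j = i then 1 else 0,
      fun j => x ((Fintype.equivFin ι).symm j), fun i => ?_, fun t => t.elim0⟩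
    rw [Fintype.sum_equiv ((Fintype.equivFin ι).symm)
      (fun j => ρ (if (Fintype.equivFin ι).symm j = i then 1 else 0) * x ((Fintype.equivFin ι).symm j))
      (fun i' => ρ (if i' = i then 1 else 0) * x i') (fun j => rfl)]
    simp [apply_ite ρ, Finset.sum_ite_eq']
  | succ m ih =>
    intro ι _ _ a x hrel
    obtain ⟨l₁, b₁, y₁, hxy₁, hab₁⟩ := singleLeft' ρ h ι (a 0) x (hrel 0)
    have hrel2 : ∀ t : Fin m, ∑ j, ρ (∑ i, a t.succ i * b₁ i j) * y₁ j = 0 := by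
      intro t
      calc ∑ j, ρ (∑ i, a t.succ i * b₁ i j) * y₁ j
          = ∑ j, ∑ i, ρ (a t.succ i) * (ρ (b₁ i j) * y₁ j) := by
            simp [map_sum, Finset.sum_mul, map_mul, mul_assoc]
        _ = ∑ i, ∑ j, ρ (a t.succ i) * (ρ (b₁ i j) * y₁ j) := Finset.sum_comm
        _ = ∑ i, ρ (a t.succ i) * x i := by
            refine Finset.sum_congr rfl fun i _ => ?_
            rw [← Finset.mul_sum, ← hxy₁]
        _ = 0 := hrel t.succ
    obtain ⟨l, b₂, y, hxy₂, hab₂⟩ := ih (Fin l₁) (fun t j => ∑ i, a t.succ i * b₁ i j) y₁ hrel2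
    refine ⟨l, fun i s => ∑ j, b₁ i j * b₂ j s, y, fun i => ?_, fun t s => ?_⟩
    · calc x i = ∑ j, ρ (b₁ i j) * y₁ j := hxy₁ i
        _ = ∑ j, ∑ s, ρ (b₁ i j) * (ρ (b₂ j s) * y s) := by
            refine Finset.sum_congr rfl fun j _ => ?_
            rw [hxy₂ j, Finset.mul_sum]
        _ = ∑ s, ∑ j, ρ (b₁ i j) * (ρ (b₂ j s) * y s) := Finset.sum_comm
        _ = ∑ s, ρ (∑ j, b₁ i j * b₂ j s) * y s := by
            simp [map_sum, Finset.sum_mul, map_mul, mul_assoc]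
    · refine Fin.cases ?_ (fun t => ?_) t
      · calc ∑ i, a 0 i * ∑ j, b₁ i j * b₂ j s
            = ∑ j, (∑ i, a 0 i * b₁ i j) * b₂ j s := by
              simp_rw [Finset.mul_sum, Finset.sum_mul, mul_assoc]
              exact Finset.sum_comm
          _ = 0 := by simp [hab₁]
      · calc ∑ i, a t.succ i * ∑ j, b₁ i j * b₂ j s
            = ∑ j, (∑ i, a t.succ i * b₁ i j) * b₂ j s := by
              simp_rw [Finset.mul_sum, Finset.sum_mul, mul_assoc]
              exact Finset.sum_comm
          _ = 0 := hab₂ t s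

lemma multiRight (h : IsRightFlatRingHom ρ) :
    ∀ (m : ℕ) (ι : Type) [Fintype ι] [DecidableEq ι] (a : Fin m → ι → R) (x : ι → C),
      (∀ t, ∑ i, x i * ρ (a t i) = 0) →
      ∃ (l : ℕ) (b : Fin l → ι → R) (y : Fin l → C),
        (∀ i, x i = ∑ j : Fin l, y j * ρ (b j i)) ∧ ∀ t j, (∑ i, b j i * a t i) = 0 := by
  intro m
  induction m with
  | zero =>
    intro ι _ _ a x _
    refine ⟨Fintype.card ι, fun j i => if (Fintype.equivFin ι).symm j = i then 1 else 0,
      fun j => x ((Fintype.equivFin ι).symm j), fun i => ?_, fun t => t.elim0⟩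
    rw [Fintype.sum_equiv ((Fintype.equivFin ι).symm)
      (fun j => x ((Fintype.equivFin ι).symm j) * ρ (if (Fintype.equivFin ι).symm j = i then 1 else 0))
      (fun i' => x i' * ρ (if i' = i then 1 else 0)) (fun j => rfl)]
    simp [apply_ite ρ, Finset.sum_ite_eq']
  | succ m ih =>
    intro ι _ _ a x hrel
    obtain ⟨l₁, b₁, y₁, hxy₁, hab₁⟩ := singleRight' ρ h ι (a 0) x (hrel 0)
    have hrel2 : ∀ t : Fin m, ∑ j, y₁ j * ρ (∑ i, b₁ j i * a t.succ i) = 0 := by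
      intro t
      calc ∑ j, y₁ j * ρ (∑ i, b₁ j i * a t.succ i)
          = ∑ j, ∑ i, (y₁ j * ρ (b₁ j i)) * ρ (a t.succ i) := by
            simp [map_sum, Finset.mul_sum, map_mul, mul_assoc]
        _ = ∑ i, ∑ j, (y₁ j * ρ (b₁ j i)) * ρ (a t.succ i) := Finset.sum_comm
        _ = ∑ i, x i * ρ (a t.succ i) := by
            refine Finset.sum_congr rfl fun i _ => ?_
            rw [← Finset.sum_mul, ← hxy₁]
        _ = 0 := hrel t.succ
    obtain ⟨l, b₂, y, hxy₂, hab₂⟩ := ih (Fin l₁) (fun t j => ∑ i, b₁ j i * a t.succ i) y₁ hrel2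
    refine ⟨l, fun s i => ∑ j, b₂ s j * b₁ j i, y, fun i => ?_, fun t s => ?_⟩
    · calc x i = ∑ j, y₁ j * ρ (b₁ j i) := hxy₁ i
        _ = ∑ j, ∑ s, (y s * ρ (b₂ s j)) * ρ (b₁ j i) := by
            refine Finset.sum_congr rfl fun j _ => ?_
            rw [hxy₂ j, Finset.sum_mul]
        _ = ∑ s, ∑ j, (y s * ρ (b₂ s j)) * ρ (b₁ j i) := Finset.sum_comm
        _ = ∑ s, y s * ρ (∑ j, b₂ s j * b₁ j i) := by
            simp [map_sum, Finset.mul_sum, map_mul, mul_assoc]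
    · refine Fin.cases ?_ (fun t => ?_) t
      · calc ∑ i, (∑ j, b₂ s j * b₁ j i) * a 0 i
            = ∑ j, b₂ s j * (∑ i, b₁ j i * a 0 i) := by
              simp_rw [Finset.mul_sum, Finset.sum_mul, mul_assoc]
              exact Finset.sum_comm
          _ = 0 := by simp [hab₁]
      · calc ∑ i, (∑ j, b₂ s j * b₁ j i) * a t.succ i
            = ∑ j, b₂ s j * (∑ i, b₁ j i * a t.succ i) := by
              simp_rw [Finset.mul_sum, Finset.sum_mul, mul_assoc]
              exact Finset.sum_comm
          _ = 0 := hab₂ t s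

end multi

private lemma natfact1 (n p r : ℕ) (hn : 0 < n) (hp : p < n) (hr : r < n) :
    (n - r) % n + (p + r) % n = (if p < (n - r) % n then 1 else 0) * n + p := by
  rcases Nat.eq_zero_or_pos r with h0 | hpos
  · subst h0
    simp [Nat.mod_self, Nat.mod_eq_of_lt hp]
  · have h1 : (n - r) % n = n - r := Nat.mod_eq_of_lt (by omega)
    rw [h1]
    rcases lt_or_ge (p + r) n with h2 | h2
    · rw [Nat.mod_eq_of_lt h2]
      have h3 : p < n - r := by omega
      simp only [h3, if_true]
      omega
    · have h4 : (p + r) % n = p + r - n := by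
        rw [Nat.mod_eq_sub_mod h2, Nat.mod_eq_of_lt (by omega)]
      rw [h4]
      have h3 : ¬ p < n - r := by omega
      simp only [h3, if_false]
      omega

private lemma natfact2 (n p q : ℕ) (hn : 0 < n) (hp : p < n) (hq : q < n) :
    p + q = (if (p + q) % n < p then 1 else 0) * n + (p + q) % n := by
  rcases lt_or_ge (p + q) n with h2 | h2
  · rw [Nat.mod_eq_of_lt h2]
    have h3 : ¬ p + q < p := by omega
    simp only [h3, if_false]
    omega
  · have h4 : (p + q) % n = p + q - n := by
      rw [Nat.mod_eq_sub_mod h2, Nat.mod_eq_of_lt (by omega)]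
    rw [h4]
    have h3 : p + q - n < p := by omega
    simp only [h3, if_true]
    omega


/-- Lemma 5.3.17: let `K` be a field of characteristic zero, `B` a `K`-algebra, `A` a
`K`-subalgebra of `B`, and `x ∈ B` such that `B` is generated as a ring by `A` and `x`,
`x ^ n = a` for some unit `a` of `A`, and `x` is a unit normalising `A`.  If `C` is an
extension of `B` which is flat as a left (resp. right) `A`-module, then `C` is flat as a
left (resp. right) `B`-module. -/
theorem stmt_16 {K B C : Type*} [Field K] [CharZero K] [Ring B] [Algebra K B]
    [Ring C] [Algebra K C]
    (A : Subalgebra K B) (x : B) (n : ℕ) (hn : 1 ≤ n)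
    (hgen : Algebra.adjoin K (insert x (A : Set B)) = ⊤)
    (a a' : B) (ha : a ∈ A) (ha' : a' ∈ A)
    (haunit : a * a' = 1) (haunit' : a' * a = 1) (hxn : x ^ n = a)
    (x' : B) (hxx' : x * x' = 1) (hx'x : x' * x = 1)
    (hnorm : ∀ b ∈ A, x * b * x' ∈ A) (hnorm' : ∀ b ∈ A, x' * b * x ∈ A)
    (ψ : B →ₐ[K] C) (hψ : Function.Injective ψ) :
    (IsLeftFlatRingHom ((ψ.comp A.val).toRingHom) → IsLeftFlatRingHom ψ.toRingHom) ∧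
    (IsRightFlatRingHom ((ψ.comp A.val).toRingHom) → IsRightFlatRingHom ψ.toRingHom) := by
  haveI : NeZero n := ⟨by omega⟩
  have hnK : (n : K) ≠ 0 := Nat.cast_ne_zero.mpr (by omega)
  -- powers of x and x' are mutually inverse
  have hxp : ∀ m : ℕ, x ^ m * x' ^ m = 1 := by
    intro m
    induction m with
    | zero => simp
    | succ m ih => rw [pow_succ, pow_succ', mul_assoc, ← mul_assoc x x', hxx', one_mul, ih]
  have hx'p : ∀ m : ℕ, x' ^ m * x ^ m = 1 := by
    intro m
    induction m with
    | zero => simp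
    | succ m ih => rw [pow_succ, pow_succ', mul_assoc, ← mul_assoc x' x, hx'x, one_mul, ih]
  -- cancellation
  have hcan : ∀ (m : ℕ) (t s : B), t * x ^ m = s * x ^ m → t = s := by
    intro m t s h
    have h2 : t * (x ^ m * x' ^ m) = s * (x ^ m * x' ^ m) := by
      rw [← mul_assoc, ← mul_assoc, h]
    simpa [hxp m] using h2
  -- conjugation identities
  have hxc : ∀ (m : ℕ) (c : B), x ^ m * c = (x ^ m * c * x' ^ m) * x ^ m := by
    intro m c
    rw [mul_assoc, hx'p, mul_one]
  have hcx : ∀ (m : ℕ) (c : B), c * x ^ m = x ^ m * (x' ^ m * c * x ^ m) := by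
    intro m c
    rw [← mul_assoc, ← mul_assoc, hxp, one_mul]
  have hcx' : ∀ (m : ℕ) (c : B), c * x' ^ m = x' ^ m * (x ^ m * c * x' ^ m) := by
    intro m c
    rw [← mul_assoc, ← mul_assoc, hx'p, one_mul]
  have hx'c : ∀ (m : ℕ) (c : B), x' ^ m * c = (x' ^ m * c * x ^ m) * x' ^ m := by
    intro m c
    rw [mul_assoc, hxp, mul_one]
  -- conjugation preserves A
  have hmem : ∀ (m : ℕ) (c : B), c ∈ A → x ^ m * c * x' ^ m ∈ A := by
    intro m
    induction m with
    | zero => intro c hc; simpa using hc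
    | succ m ih =>
      intro c hc
      have : x ^ (m+1) * c * x' ^ (m+1) = x * (x ^ m * c * x' ^ m) * x' := by
        rw [pow_succ' x m, pow_succ x' m]
        noncomm_ring
      rw [this]
      exact hnorm _ (ih c hc)
  have hmem' : ∀ (m : ℕ) (c : B), c ∈ A → x' ^ m * c * x ^ m ∈ A := by
    intro m
    induction m with
    | zero => intro c hc; simpa using hc
    | succ m ih =>
      intro c hc
      have : x' ^ (m+1) * c * x ^ (m+1) = x' * (x' ^ m * c * x ^ m) * x := by
        rw [pow_succ' x' m, pow_succ x m]
        noncomm_ring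
      rw [this]
      exact hnorm' _ (ih c hc)
  -- power reduction
  have hqn : ∀ (q r : ℕ), x ^ (q * n + r) = a ^ q * x ^ r := by
    intro q
    induction q with
    | zero => simp
    | succ q ih =>
      intro r
      have he : (q+1) * n + r = q * n + (n + r) := by ring
      rw [he, ih (n + r), pow_add, ← mul_assoc, ← hxn, pow_succ, hxn]
  -- the exponent identity (left version)
  have Ileft : ∀ p r : Fin n, x ^ (((p + r : Fin n)):ℕ) * x' ^ (p:ℕ) =
      x' ^ (((-r : Fin n)):ℕ) * a ^ (if (p:ℕ) < (((-r : Fin n)):ℕ) then 1 else 0) := by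
    intro p r
    set e : ℕ := if (p:ℕ) < (((-r : Fin n)):ℕ) then 1 else 0 with he
    have hnf : (((-r : Fin n)):ℕ) + (((p + r : Fin n)):ℕ) = e * n + (p:ℕ) := by
      rw [he, Fin.val_add, Fin.coe_neg]
      exact natfact1 n (p:ℕ) (r:ℕ) (by omega) p.isLt r.isLt
    apply hcan (p:ℕ)
    calc x ^ (((p + r : Fin n)):ℕ) * x' ^ (p:ℕ) * x ^ (p:ℕ)
        = x ^ (((p + r : Fin n)):ℕ) := by rw [mul_assoc, hx'p, mul_one]
      _ = x' ^ (((-r : Fin n)):ℕ) * a ^ e * x ^ (p:ℕ) := by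
          rw [mul_assoc, ← hqn e (p:ℕ), ← hnf, pow_add, ← mul_assoc, hx'p, one_mul]
  -- the exponent identity (right version)
  have Iright : ∀ p r : Fin n, x' ^ (p:ℕ) * x ^ (((p + r : Fin n)):ℕ) =
      a ^ (if (p:ℕ) < (((-r : Fin n)):ℕ) then 1 else 0) * x' ^ (((-r : Fin n)):ℕ) := by
    intro p r
    set e : ℕ := if (p:ℕ) < (((-r : Fin n)):ℕ) then 1 else 0 with he
    have hnf : (((p + r : Fin n)):ℕ) + (((-r : Fin n)):ℕ) = (p:ℕ) + e * n := by
      rw [he, Fin.val_add, Fin.coe_neg]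
      have := natfact1 n (p:ℕ) (r:ℕ) (by omega) p.isLt r.isLt
      omega
    apply hcan (((-r : Fin n)):ℕ)
    calc x' ^ (p:ℕ) * x ^ (((p + r : Fin n)):ℕ) * x ^ (((-r : Fin n)):ℕ)
        = x' ^ (p:ℕ) * (x ^ ((p:ℕ)) * x ^ (e * n)) := by
          rw [mul_assoc, ← pow_add, hnf, pow_add]
      _ = x ^ (e * n) := by rw [← mul_assoc, hx'p, one_mul]
      _ = a ^ e := by simpa using hqn e 0
      _ = a ^ e * x' ^ (((-r : Fin n)):ℕ) * x ^ (((-r : Fin n)):ℕ) := by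
          rw [mul_assoc, hx'p, mul_one]
  -- key multiplication identities
  have key1 : ∀ (mu j : Fin n) (c : B), x ^ (mu:ℕ) * (c * x ^ (j:ℕ)) =
      ((x ^ (mu:ℕ) * c * x' ^ (mu:ℕ)) *
        a ^ (if (((mu + j : Fin n)):ℕ) < (mu:ℕ) then 1 else 0)) * x ^ (((mu + j : Fin n)):ℕ) := by
    intro mu j c
    set e : ℕ := if (((mu + j : Fin n)):ℕ) < (mu:ℕ) then 1 else 0 with he
    have hnf : (mu:ℕ) + (j:ℕ) = e * n + (((mu + j : Fin n)):ℕ) := by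
      rw [he, Fin.val_add]
      exact natfact2 n (mu:ℕ) (j:ℕ) (by omega) mu.isLt j.isLt
    calc x ^ (mu:ℕ) * (c * x ^ (j:ℕ))
        = (x ^ (mu:ℕ) * c) * x ^ (j:ℕ) := by rw [mul_assoc]
      _ = ((x ^ (mu:ℕ) * c * x' ^ (mu:ℕ)) * x ^ (mu:ℕ)) * x ^ (j:ℕ) := by rw [← hxc]
      _ = (x ^ (mu:ℕ) * c * x' ^ (mu:ℕ)) * x ^ ((mu:ℕ) + (j:ℕ)) := by rw [mul_assoc, pow_add]
      _ = (x ^ (mu:ℕ) * c * x' ^ (mu:ℕ)) * (a ^ e * x ^ (((mu + j : Fin n)):ℕ)) := by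
          rw [hnf, hqn]
      _ = _ := by rw [← mul_assoc]
  have key2 : ∀ (mu j : Fin n) (c : B), (x ^ (j:ℕ) * c) * x ^ (mu:ℕ) =
      x ^ (((j + mu : Fin n)):ℕ) *
        (a ^ (if (((j + mu : Fin n)):ℕ) < (mu:ℕ) then 1 else 0) *
          (x' ^ (mu:ℕ) * c * x ^ (mu:ℕ))) := by
    intro mu j c
    set e : ℕ := if (((j + mu : Fin n)):ℕ) < (mu:ℕ) then 1 else 0 with he
    have hnf : (j:ℕ) + (mu:ℕ) = (((j + mu : Fin n)):ℕ) + e * n := by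
      have h2 := natfact2 n (mu:ℕ) (j:ℕ) (by omega) mu.isLt j.isLt
      have h3 : ((j:ℕ) + (mu:ℕ)) % n = ((mu:ℕ) + (j:ℕ)) % n := by rw [Nat.add_comm]
      rw [← h3] at h2
      rw [he, Fin.val_add]
      omega
    have hxe : x ^ ((j:ℕ) + (mu:ℕ)) = x ^ (((j + mu : Fin n)):ℕ) * a ^ e := by
      have : x ^ (e * n) = a ^ e := by simpa using hqn e 0
      rw [hnf, pow_add, this]
    calc (x ^ (j:ℕ) * c) * x ^ (mu:ℕ)
        = x ^ (j:ℕ) * (x ^ (mu:ℕ) * (x' ^ (mu:ℕ) * c * x ^ (mu:ℕ))) := by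
          rw [mul_assoc, ← hcx]
      _ = x ^ ((j:ℕ) + (mu:ℕ)) * (x' ^ (mu:ℕ) * c * x ^ (mu:ℕ)) := by
          rw [← mul_assoc, ← pow_add]
      _ = _ := by rw [hxe, mul_assoc]
  -- representation of elements of B
  have hL : ∀ c : B, c ∈ A → ∀ m : ℕ,
      ∃ f : Fin n → A, c * x ^ m = ∑ j : Fin n, (f j : B) * x ^ (j:ℕ) := by
    intro c hc m
    have hmn : m % n < n := Nat.mod_lt _ (by omega)
    refine ⟨fun j => if j = (⟨m % n, hmn⟩ : Fin n) then
      ⟨c * a ^ (m / n), A.mul_mem hc (A.pow_mem ha _)⟩ else 0, ?_⟩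
    have hm : m / n * n + m % n = m := Nat.div_add_mod' m n
    have hx : x ^ m = a ^ (m / n) * x ^ (m % n) := by
      conv_lhs => rw [← hm, hqn]
    rw [hx, ← mul_assoc]
    rw [Finset.sum_eq_single (⟨m % n, hmn⟩ : Fin n)]
    · simp
    · intro j _ hj
      simp [hj]
    · simp
  have hrep : ∀ b : B, ∃ f : Fin n → A, b = ∑ j : Fin n, (f j : B) * x ^ (j:ℕ) := by
    have hadd : ∀ b₁ b₂ : B,
        (∃ f : Fin n → A, b₁ = ∑ j : Fin n, (f j : B) * x ^ (j:ℕ)) →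
        (∃ f : Fin n → A, b₂ = ∑ j : Fin n, (f j : B) * x ^ (j:ℕ)) →
        (∃ f : Fin n → A, b₁ + b₂ = ∑ j : Fin n, (f j : B) * x ^ (j:ℕ)) := by
      rintro b₁ b₂ ⟨f, hf⟩ ⟨g, hg⟩
      refine ⟨f + g, ?_⟩
      rw [hf, hg, ← Finset.sum_add_distrib]
      refine Finset.sum_congr rfl fun j _ => ?_
      rw [Pi.add_apply]
      push_cast
      rw [add_mul]
    have hzero : ∃ f : Fin n → A, (0 : B) = ∑ j : Fin n, (f j : B) * x ^ (j:ℕ) :=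
      ⟨0, by simp⟩
    intro bb
    have hb : bb ∈ Algebra.adjoin K (insert x (A : Set B)) := by rw [hgen]; trivial
    induction hb using Algebra.adjoin_induction with
    | mem v hv =>
      rcases hv with hv | hv
      · subst hv
        obtain ⟨f, hf⟩ := hL 1 A.one_mem 1
        exact ⟨f, by simpa using hf⟩
      · obtain ⟨f, hf⟩ := hL v hv 0
        exact ⟨f, by simpa using hf⟩
    | algebraMap r =>
      obtain ⟨f, hf⟩ := hL _ (A.algebraMap_mem r) 0
      exact ⟨f, by simpa using hf⟩
    | add v w hv hw ihv ihw => exact hadd v w ihv ihw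
    | mul v w hv hw ihv ihw =>
      obtain ⟨f, hf⟩ := ihv
      obtain ⟨g, hg⟩ := ihw
      rw [hf, hg, Finset.sum_mul_sum]
      apply Finset.sum_induction _ (fun t => ∃ h : Fin n → A, t = ∑ j : Fin n, (h j : B) * x ^ (j:ℕ)) hadd hzero
      intro j₁ _
      apply Finset.sum_induction _ (fun t => ∃ h : Fin n → A, t = ∑ j : Fin n, (h j : B) * x ^ (j:ℕ)) hadd hzero
      intro j₂ _
      have hterm : ((f j₁ : B) * x ^ (j₁:ℕ)) * ((g j₂ : B) * x ^ (j₂:ℕ)) =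
          ((f j₁ : B) * (x ^ (j₁:ℕ) * (g j₂ : B) * x' ^ (j₁:ℕ))) * x ^ ((j₁:ℕ) + (j₂:ℕ)) := by
        calc ((f j₁ : B) * x ^ (j₁:ℕ)) * ((g j₂ : B) * x ^ (j₂:ℕ))
            = (f j₁ : B) * ((x ^ (j₁:ℕ) * (g j₂ : B)) * x ^ (j₂:ℕ)) := by
              rw [mul_assoc, mul_assoc]
          _ = (f j₁ : B) * (((x ^ (j₁:ℕ) * (g j₂ : B) * x' ^ (j₁:ℕ)) * x ^ (j₁:ℕ)) * x ^ (j₂:ℕ)) := by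
              rw [← hxc]
          _ = _ := by rw [mul_assoc _ (x ^ (j₁:ℕ)), ← pow_add, ← mul_assoc]
      rw [hterm]
      exact hL _ (A.mul_mem (f j₁).2 (hmem _ _ (g j₂).2)) _
  have hrep' : ∀ b : B, ∃ f : Fin n → A, b = ∑ j : Fin n, x ^ (j:ℕ) * (f j : B) := by
    intro bb
    obtain ⟨f, hf⟩ := hrep bb
    refine ⟨fun j => ⟨x' ^ (j:ℕ) * (f j : B) * x ^ (j:ℕ), hmem' _ _ (f j).2⟩, ?_⟩
    rw [hf]
    exact Finset.sum_congr rfl fun j _ => hcx (j:ℕ) (f j : B)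
  have hρ : ∀ v : A, (ψ.comp A.val).toRingHom v = ψ (v : B) := fun _ => rfl
  have hψ' : ∀ b : B, ψ.toRingHom b = ψ b := fun _ => rfl
  constructor
  · -- left flatness
    intro hA k bb z hrel
    choose α hα using fun i => hrep (bb i)
    have hccmem : ∀ (mu : Fin n) (q : Fin k × Fin n),
        x ^ (mu:ℕ) * ((α q.1 (q.2 - mu) : A) : B) * x' ^ (mu:ℕ) ∈ A :=
      fun mu q => hmem _ _ (α q.1 (q.2 - mu)).2
    set cc : Fin n → (Fin k × Fin n) → A := fun mu q =>
      (⟨_, hccmem mu q⟩ : A) * (⟨a, ha⟩ : A) ^ (if (q.2:ℕ) < (mu:ℕ) then 1 else 0) with hcc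
    set u : Fin k × Fin n → C := fun q => (ψ x) ^ (q.2:ℕ) * z q.1 with hu
    have hocc : ∀ mu q, ((cc mu q : A) : B) =
        (x ^ (mu:ℕ) * ((α q.1 (q.2 - mu) : A) : B) * x' ^ (mu:ℕ)) *
          a ^ (if (q.2:ℕ) < (mu:ℕ) then 1 else 0) := by
      intro mu q
      rw [hcc]
      push_cast
      rfl
    have hsys : ∀ mu : Fin n, ∑ q : Fin k × Fin n, (ψ.comp A.val).toRingHom (cc mu q) * u q = 0 := by
      intro mu
      have hterm : ∀ (i : Fin k) (j : Fin n),
          (ψ.comp A.val).toRingHom (cc mu (i, mu + j)) * u (i, mu + j) =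
          ψ (x ^ (mu:ℕ)) * (ψ (((α i j : A) : B) * x ^ (j:ℕ)) * z i) := by
        intro i j
        have h1 : ((cc mu (i, mu + j) : A) : B) * x ^ (((mu + j : Fin n)):ℕ) =
            x ^ (mu:ℕ) * (((α i j : A) : B) * x ^ (j:ℕ)) := by
          rw [hocc]
          simp only [add_sub_cancel_left]
          exact (key1 mu j _).symm
        calc (ψ.comp A.val).toRingHom (cc mu (i, mu + j)) * u (i, mu + j)
            = ψ (↑(cc mu (i, mu + j))) * ((ψ x) ^ (((mu + j : Fin n)):ℕ) * z i) := by rw [hρ, hu]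
          _ = (ψ (↑(cc mu (i, mu + j))) * ψ (x ^ (((mu + j : Fin n)):ℕ))) * z i := by
              rw [← mul_assoc, map_pow]
          _ = ψ (↑(cc mu (i, mu + j)) * x ^ (((mu + j : Fin n)):ℕ)) * z i := by rw [← map_mul]
          _ = ψ (x ^ (mu:ℕ) * (((α i j : A) : B) * x ^ (j:ℕ))) * z i := by rw [h1]
          _ = ψ (x ^ (mu:ℕ)) * (ψ (((α i j : A) : B) * x ^ (j:ℕ)) * z i) := by
              rw [map_mul, mul_assoc]
      calc ∑ q : Fin k × Fin n, (ψ.comp A.val).toRingHom (cc mu q) * u q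
          = ∑ i : Fin k, ∑ p : Fin n, (ψ.comp A.val).toRingHom (cc mu (i, p)) * u (i, p) := by
            rw [Fintype.sum_prod_type]
        _ = ∑ i : Fin k, ψ (x ^ (mu:ℕ)) * (ψ (bb i) * z i) := by
            refine Finset.sum_congr rfl fun i _ => ?_
            rw [← Fintype.sum_equiv (Equiv.addLeft mu)
              (fun j => ψ (x ^ (mu:ℕ)) * (ψ (((α i j : A) : B) * x ^ (j:ℕ)) * z i))
              (fun p => (ψ.comp A.val).toRingHom (cc mu (i, p)) * u (i, p))
              (fun j => (hterm i j).symm)]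
            rw [hα i, map_sum, Finset.sum_mul, Finset.mul_sum]
        _ = ψ (x ^ (mu:ℕ)) * ∑ i, ψ (bb i) * z i := by rw [Finset.mul_sum]
        _ = 0 := by
            have : ∑ i, ψ (bb i) * z i = 0 := hrel
            rw [this, mul_zero]
    obtain ⟨l, c', y, hxy, hrel'⟩ := multiLeft _ hA n (Fin k × Fin n) cc u hsys
    refine ⟨l, fun i s => (n:K)⁻¹ • ∑ p : Fin n, x' ^ (p:ℕ) * ((c' (i, p) s : A) : B), y,
      fun i => ?_, fun s => ?_⟩
    · -- recovering z i
      have h1 : ∀ p : Fin n, ψ (x' ^ (p:ℕ)) * u (i, p) = z i := by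
        intro p
        show ψ (x' ^ (p:ℕ)) * ((ψ x) ^ (p:ℕ) * z i) = z i
        have hmp : (ψ x) ^ (p:ℕ) = ψ (x ^ (p:ℕ)) := (map_pow ψ x _).symm
        rw [hmp, ← mul_assoc, ← map_mul, hx'p, map_one, one_mul]
      symm
      calc ∑ s, ψ.toRingHom ((n:K)⁻¹ • ∑ p : Fin n, x' ^ (p:ℕ) * ((c' (i, p) s : A) : B)) * y s
          = ∑ s, (n:K)⁻¹ • ∑ p : Fin n, ψ (x' ^ (p:ℕ)) * (ψ ((c' (i, p) s : A) : B) * y s) := by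
            refine Finset.sum_congr rfl fun s _ => ?_
            rw [hψ', map_smul, smul_mul_assoc, map_sum, Finset.sum_mul]
            congr 1
            refine Finset.sum_congr rfl fun p _ => ?_
            rw [map_mul, mul_assoc]
        _ = (n:K)⁻¹ • ∑ p : Fin n, ψ (x' ^ (p:ℕ)) * ∑ s, ψ ((c' (i, p) s : A) : B) * y s := by
            rw [← Finset.smul_sum, Finset.sum_comm]
            congr 1
            refine Finset.sum_congr rfl fun p _ => ?_
            rw [Finset.mul_sum]
        _ = (n:K)⁻¹ • ∑ p : Fin n, z i := by
            refine congrArg _ (Finset.sum_congr rfl fun p _ => ?_)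
            rw [show ∑ s, ψ ((c' (i, p) s : A) : B) * y s
                = ∑ s, (ψ.comp A.val).toRingHom (c' (i, p) s) * y s from rfl, ← hxy (i, p)]
            exact h1 p
        _ = (n:K)⁻¹ • ((n : ℕ) • z i) := by
            rw [Finset.sum_const, Finset.card_univ, Fintype.card_fin]
        _ = z i := by
            rw [← Nat.cast_smul_eq_nsmul K, smul_smul, inv_mul_cancel₀ hnK, one_smul]
    · -- the relations over B
      have hcoe : ∀ r : Fin n, ∑ i : Fin k, ∑ p : Fin n,
          ((cc (-r) (i, p) : A) : B) * ((c' (i, p) s : A) : B) = 0 := by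
        intro r
        have h0 := congrArg (A.val) (hrel' (-r) s)
        simp only [map_sum, map_mul, map_zero] at h0
        rw [Fintype.sum_prod_type] at h0
        exact h0
      have hblock : ∀ r : Fin n, ∑ i : Fin k, ∑ p : Fin n,
          ((α i (p + r) : A) : B) * x ^ (((p + r : Fin n)):ℕ) *
            (x' ^ (p:ℕ) * ((c' (i, p) s : A) : B)) = 0 := by
        intro r
        have hterm : ∀ (i : Fin k) (p : Fin n),
            ((α i (p + r) : A) : B) * x ^ (((p + r : Fin n)):ℕ) *
              (x' ^ (p:ℕ) * ((c' (i, p) s : A) : B)) =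
            x' ^ (((-r : Fin n)):ℕ) * (((cc (-r) (i, p) : A) : B) * ((c' (i, p) s : A) : B)) := by
          intro i p
          have e1 : ((α i (p + r) : A) : B) * x ^ (((p + r : Fin n)):ℕ) *
              (x' ^ (p:ℕ) * ((c' (i, p) s : A) : B)) =
              ((α i (p + r) : A) : B) * (x ^ (((p + r : Fin n)):ℕ) * x' ^ (p:ℕ)) *
                ((c' (i, p) s : A) : B) := by
            rw [mul_assoc, mul_assoc, mul_assoc]
          rw [e1, Ileft p r, ← mul_assoc, hcx' _ ((α i (p + r) : A) : B)]
          rw [hocc]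
          simp only [sub_neg_eq_add]
          rw [mul_assoc (x' ^ (((-r : Fin n)):ℕ)), mul_assoc (x' ^ (((-r : Fin n)):ℕ)),
            mul_assoc (x ^ (((-r : Fin n)):ℕ) * _ * _)]
        calc ∑ i : Fin k, ∑ p : Fin n,
            ((α i (p + r) : A) : B) * x ^ (((p + r : Fin n)):ℕ) *
              (x' ^ (p:ℕ) * ((c' (i, p) s : A) : B))
            = ∑ i : Fin k, ∑ p : Fin n, x' ^ (((-r : Fin n)):ℕ) *
                (((cc (-r) (i, p) : A) : B) * ((c' (i, p) s : A) : B)) :=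
              Finset.sum_congr rfl fun i _ => Finset.sum_congr rfl fun p _ => hterm i p
          _ = x' ^ (((-r : Fin n)):ℕ) * ∑ i : Fin k, ∑ p : Fin n,
                (((cc (-r) (i, p) : A) : B) * ((c' (i, p) s : A) : B)) := by
              rw [Finset.mul_sum]
              exact Finset.sum_congr rfl fun i _ => (Finset.mul_sum _ _ _).symm
          _ = 0 := by rw [hcoe r, mul_zero]
      calc ∑ i : Fin k, bb i * ((n:K)⁻¹ • ∑ p : Fin n, x' ^ (p:ℕ) * ((c' (i, p) s : A) : B))
          = ∑ i : Fin k, (n:K)⁻¹ • (bb i * ∑ p : Fin n, x' ^ (p:ℕ) * ((c' (i, p) s : A) : B)) :=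
            Finset.sum_congr rfl fun i _ => mul_smul_comm _ _ _
        _ = (n:K)⁻¹ • ∑ i : Fin k, ∑ p : Fin n, ∑ j : Fin n,
              ((α i j : A) : B) * x ^ (j:ℕ) * (x' ^ (p:ℕ) * ((c' (i, p) s : A) : B)) := by
            rw [← Finset.smul_sum]
            congr 1
            refine Finset.sum_congr rfl fun i _ => ?_
            rw [Finset.mul_sum]
            refine Finset.sum_congr rfl fun p _ => ?_
            conv_lhs => rw [hα i]
            rw [Finset.sum_mul]
        _ = (n:K)⁻¹ • ∑ i : Fin k, ∑ p : Fin n, ∑ r : Fin n,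
              ((α i (p + r) : A) : B) * x ^ (((p + r : Fin n)):ℕ) *
                (x' ^ (p:ℕ) * ((c' (i, p) s : A) : B)) := by
            congr 1
            refine Finset.sum_congr rfl fun i _ => Finset.sum_congr rfl fun p _ => ?_
            exact (Fintype.sum_equiv (Equiv.addLeft p)
              (fun r => ((α i (p + r) : A) : B) * x ^ (((p + r : Fin n)):ℕ) *
                (x' ^ (p:ℕ) * ((c' (i, p) s : A) : B)))
              (fun j => ((α i j : A) : B) * x ^ (j:ℕ) *
                (x' ^ (p:ℕ) * ((c' (i, p) s : A) : B)))
              (fun r => rfl)).symm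
        _ = (n:K)⁻¹ • ∑ r : Fin n, ∑ i : Fin k, ∑ p : Fin n,
              ((α i (p + r) : A) : B) * x ^ (((p + r : Fin n)):ℕ) *
                (x' ^ (p:ℕ) * ((c' (i, p) s : A) : B)) := by
            congr 1
            exact (Finset.sum_congr rfl fun i _ => Finset.sum_comm).trans Finset.sum_comm
        _ = 0 := by
            rw [Finset.sum_eq_zero fun r _ => hblock r, smul_zero]
  · -- right flatness
    intro hA k bb z hrel
    choose α hα using fun i => hrep' (bb i)
    have hccmem : ∀ (mu : Fin n) (q : Fin k × Fin n),
        x' ^ (mu:ℕ) * ((α q.1 (q.2 - mu) : A) : B) * x ^ (mu:ℕ) ∈ A :=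
      fun mu q => hmem' _ _ (α q.1 (q.2 - mu)).2
    set cc : Fin n → (Fin k × Fin n) → A := fun mu q =>
      (⟨a, ha⟩ : A) ^ (if (q.2:ℕ) < (mu:ℕ) then 1 else 0) * (⟨_, hccmem mu q⟩ : A) with hcc
    set u : Fin k × Fin n → C := fun q => z q.1 * (ψ x) ^ (q.2:ℕ) with hu
    have hocc : ∀ mu q, ((cc mu q : A) : B) =
        a ^ (if (q.2:ℕ) < (mu:ℕ) then 1 else 0) *
          (x' ^ (mu:ℕ) * ((α q.1 (q.2 - mu) : A) : B) * x ^ (mu:ℕ)) := by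
      intro mu q
      rw [hcc]
      push_cast
      rfl
    have hsys : ∀ mu : Fin n, ∑ q : Fin k × Fin n, u q * (ψ.comp A.val).toRingHom (cc mu q) = 0 := by
      intro mu
      have hterm : ∀ (i : Fin k) (j : Fin n),
          u (i, j + mu) * (ψ.comp A.val).toRingHom (cc mu (i, j + mu)) =
          (z i * ψ (x ^ (j:ℕ) * ((α i j : A) : B))) * ψ (x ^ (mu:ℕ)) := by
        intro i j
        have h1 : x ^ (((j + mu : Fin n)):ℕ) * ((cc mu (i, j + mu) : A) : B) =
            (x ^ (j:ℕ) * ((α i j : A) : B)) * x ^ (mu:ℕ) := by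
          rw [hocc]
          simp only [add_sub_cancel_right]
          exact (key2 mu j _).symm
        calc u (i, j + mu) * (ψ.comp A.val).toRingHom (cc mu (i, j + mu))
            = (z i * (ψ x) ^ (((j + mu : Fin n)):ℕ)) * ψ (↑(cc mu (i, j + mu))) := by rw [hρ, hu]
          _ = z i * (ψ (x ^ (((j + mu : Fin n)):ℕ)) * ψ (↑(cc mu (i, j + mu)))) := by
              rw [map_pow, mul_assoc]
          _ = z i * ψ (x ^ (((j + mu : Fin n)):ℕ) * ↑(cc mu (i, j + mu))) := by rw [← map_mul]
          _ = z i * ψ ((x ^ (j:ℕ) * ((α i j : A) : B)) * x ^ (mu:ℕ)) := by rw [h1]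
          _ = (z i * ψ (x ^ (j:ℕ) * ((α i j : A) : B))) * ψ (x ^ (mu:ℕ)) := by
              rw [map_mul, ← mul_assoc]
      calc ∑ q : Fin k × Fin n, u q * (ψ.comp A.val).toRingHom (cc mu q)
          = ∑ i : Fin k, ∑ p : Fin n, u (i, p) * (ψ.comp A.val).toRingHom (cc mu (i, p)) := by
            rw [Fintype.sum_prod_type]
        _ = ∑ i : Fin k, (z i * ψ (bb i)) * ψ (x ^ (mu:ℕ)) := by
            refine Finset.sum_congr rfl fun i _ => ?_
            rw [← Fintype.sum_equiv (Equiv.addRight mu)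
              (fun j => (z i * ψ (x ^ (j:ℕ) * ((α i j : A) : B))) * ψ (x ^ (mu:ℕ)))
              (fun p => u (i, p) * (ψ.comp A.val).toRingHom (cc mu (i, p)))
              (fun j => (hterm i j).symm)]
            rw [hα i, map_sum, Finset.mul_sum, Finset.sum_mul]
        _ = (∑ i, z i * ψ (bb i)) * ψ (x ^ (mu:ℕ)) := by rw [Finset.sum_mul]
        _ = 0 := by
            have : ∑ i, z i * ψ (bb i) = 0 := hrel
            rw [this, zero_mul]
    obtain ⟨l, c', y, hxy, hrel'⟩ := multiRight _ hA n (Fin k × Fin n) cc u hsys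
    refine ⟨l, fun s i => (n:K)⁻¹ • ∑ p : Fin n, ((c' s (i, p) : A) : B) * x' ^ (p:ℕ), y,
      fun i => ?_, fun s => ?_⟩
    · -- recovering z i
      have h1 : ∀ p : Fin n, u (i, p) * ψ (x' ^ (p:ℕ)) = z i := by
        intro p
        show (z i * (ψ x) ^ (p:ℕ)) * ψ (x' ^ (p:ℕ)) = z i
        have hmp : (ψ x) ^ (p:ℕ) = ψ (x ^ (p:ℕ)) := (map_pow ψ x _).symm
        rw [hmp, mul_assoc, ← map_mul, hxp, map_one, mul_one]
      symm
      calc ∑ s, y s * ψ.toRingHom ((n:K)⁻¹ • ∑ p : Fin n, ((c' s (i, p) : A) : B) * x' ^ (p:ℕ))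
          = ∑ s, (n:K)⁻¹ • ∑ p : Fin n, (y s * ψ ((c' s (i, p) : A) : B)) * ψ (x' ^ (p:ℕ)) := by
            refine Finset.sum_congr rfl fun s _ => ?_
            rw [hψ', map_smul, mul_smul_comm, map_sum, Finset.mul_sum]
            congr 1
            refine Finset.sum_congr rfl fun p _ => ?_
            rw [map_mul, mul_assoc]
        _ = (n:K)⁻¹ • ∑ p : Fin n, (∑ s, y s * ψ ((c' s (i, p) : A) : B)) * ψ (x' ^ (p:ℕ)) := by
            rw [← Finset.smul_sum, Finset.sum_comm]
            congr 1
            refine Finset.sum_congr rfl fun p _ => ?_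
            rw [Finset.sum_mul]
        _ = (n:K)⁻¹ • ∑ p : Fin n, z i := by
            refine congrArg _ (Finset.sum_congr rfl fun p _ => ?_)
            rw [show ∑ s, y s * ψ ((c' s (i, p) : A) : B)
                = ∑ s, y s * (ψ.comp A.val).toRingHom (c' s (i, p)) from rfl, ← hxy (i, p)]
            exact h1 p
        _ = (n:K)⁻¹ • ((n : ℕ) • z i) := by
            rw [Finset.sum_const, Finset.card_univ, Fintype.card_fin]
        _ = z i := by
            rw [← Nat.cast_smul_eq_nsmul K, smul_smul, inv_mul_cancel₀ hnK, one_smul]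
    · -- the relations over B
      have hcoe : ∀ r : Fin n, ∑ i : Fin k, ∑ p : Fin n,
          ((c' s (i, p) : A) : B) * ((cc (-r) (i, p) : A) : B) = 0 := by
        intro r
        have h0 := congrArg (A.val) (hrel' (-r) s)
        simp only [map_sum, map_mul, map_zero] at h0
        rw [Fintype.sum_prod_type] at h0
        exact h0
      have hblock : ∀ r : Fin n, ∑ i : Fin k, ∑ p : Fin n,
          ((c' s (i, p) : A) : B) * x' ^ (p:ℕ) *
            (x ^ (((p + r : Fin n)):ℕ) * ((α i (p + r) : A) : B)) = 0 := by
        intro r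
        have hterm : ∀ (i : Fin k) (p : Fin n),
            ((c' s (i, p) : A) : B) * x' ^ (p:ℕ) *
              (x ^ (((p + r : Fin n)):ℕ) * ((α i (p + r) : A) : B)) =
            (((c' s (i, p) : A) : B) * ((cc (-r) (i, p) : A) : B)) * x' ^ (((-r : Fin n)):ℕ) := by
          intro i p
          have e1 : ((c' s (i, p) : A) : B) * x' ^ (p:ℕ) *
              (x ^ (((p + r : Fin n)):ℕ) * ((α i (p + r) : A) : B)) =
              ((c' s (i, p) : A) : B) * (x' ^ (p:ℕ) * x ^ (((p + r : Fin n)):ℕ)) *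
                ((α i (p + r) : A) : B) := by
            rw [mul_assoc, mul_assoc, mul_assoc]
          rw [e1, Iright p r]
          rw [← mul_assoc ((c' s (i, p) : A) : B), mul_assoc _ (x' ^ (((-r : Fin n)):ℕ)),
            hx'c _ ((α i (p + r) : A) : B), hocc]
          simp only [sub_neg_eq_add]
          rw [← mul_assoc, ← mul_assoc, mul_assoc ((c' s (i, p) : A) : B)]
          noncomm_ring
        calc ∑ i : Fin k, ∑ p : Fin n,
            ((c' s (i, p) : A) : B) * x' ^ (p:ℕ) *
              (x ^ (((p + r : Fin n)):ℕ) * ((α i (p + r) : A) : B))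
            = ∑ i : Fin k, ∑ p : Fin n,
                (((c' s (i, p) : A) : B) * ((cc (-r) (i, p) : A) : B)) * x' ^ (((-r : Fin n)):ℕ) :=
              Finset.sum_congr rfl fun i _ => Finset.sum_congr rfl fun p _ => hterm i p
          _ = (∑ i : Fin k, ∑ p : Fin n,
                ((c' s (i, p) : A) : B) * ((cc (-r) (i, p) : A) : B)) * x' ^ (((-r : Fin n)):ℕ) := by
              rw [Finset.sum_mul]
              exact Finset.sum_congr rfl fun i _ => (Finset.sum_mul _ _ _).symm
          _ = 0 := by rw [hcoe r, zero_mul]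
      calc ∑ i : Fin k, ((n:K)⁻¹ • ∑ p : Fin n, ((c' s (i, p) : A) : B) * x' ^ (p:ℕ)) * bb i
          = ∑ i : Fin k, (n:K)⁻¹ • ((∑ p : Fin n, ((c' s (i, p) : A) : B) * x' ^ (p:ℕ)) * bb i) :=
            Finset.sum_congr rfl fun i _ => smul_mul_assoc _ _ _
        _ = (n:K)⁻¹ • ∑ i : Fin k, ∑ p : Fin n, ∑ j : Fin n,
              ((c' s (i, p) : A) : B) * x' ^ (p:ℕ) * (x ^ (j:ℕ) * ((α i j : A) : B)) := by
            rw [← Finset.smul_sum]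
            congr 1
            refine Finset.sum_congr rfl fun i _ => ?_
            rw [Finset.sum_mul]
            refine Finset.sum_congr rfl fun p _ => ?_
            conv_lhs => rw [hα i]
            rw [Finset.mul_sum]
        _ = (n:K)⁻¹ • ∑ i : Fin k, ∑ p : Fin n, ∑ r : Fin n,
              ((c' s (i, p) : A) : B) * x' ^ (p:ℕ) *
                (x ^ (((p + r : Fin n)):ℕ) * ((α i (p + r) : A) : B)) := by
            congr 1
            refine Finset.sum_congr rfl fun i _ => Finset.sum_congr rfl fun p _ => ?_
            exact (Fintype.sum_equiv (Equiv.addLeft p)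
              (fun r => ((c' s (i, p) : A) : B) * x' ^ (p:ℕ) *
                (x ^ (((p + r : Fin n)):ℕ) * ((α i (p + r) : A) : B)))
              (fun j => ((c' s (i, p) : A) : B) * x' ^ (p:ℕ) *
                (x ^ (j:ℕ) * ((α i j : A) : B)))
              (fun r => rfl)).symm
        _ = (n:K)⁻¹ • ∑ r : Fin n, ∑ i : Fin k, ∑ p : Fin n,
              ((c' s (i, p) : A) : B) * x' ^ (p:ℕ) *
                (x ^ (((p + r : Fin n)):ℕ) * ((α i (p + r) : A) : B)) := by
            congr 1
            exact (Finset.sum_congr rfl fun i _ => Finset.sum_comm).trans Finset.sum_comm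
        _ = 0 := by
            rw [Finset.sum_eq_zero fun r _ => hblock r, smul_zero]
end

section
/- Let K be a discretely valued complete nonarchimedean field with ring of integers O_K and uniformizer π, let G be a group acting linearly on a K-vector space V, and let M be an O_K-lattice in V. Then G preserves the commensurability class of M (i.e. for each g ∈ G, the lattice gM is commensurable with M) if and only if every element of G acts as a continuous automorphism of V when V is equipped with the locally convex topology defined by the gauge seminorm of M. -/
/-- An `O_K`-lattice in a `K`-vector space `V`: an `O_K`-submodule which spans `V` over `K`
(equivalently, which is absorbing). -/
def IsLatticeIn (K : Type*) [NormedField K] {V : Type*} [AddCommGroup V] [Module K V]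
    (M : Set V) : Prop :=
  (0 : V) ∈ M ∧ (∀ x ∈ M, ∀ y ∈ M, x + y ∈ M) ∧
    (∀ c : K, ‖c‖ ≤ 1 → ∀ x ∈ M, c • x ∈ M) ∧
    ∀ v : V, ∃ c : K, c ≠ 0 ∧ c • v ∈ M

/-- Two lattices are commensurable if `α • M₂ ⊆ M₁ ⊆ α⁻¹ • M₂` for some nonzero `α ∈ K`. -/
def AreCommensurable (K : Type*) [NormedField K] {V : Type*} [AddCommGroup V] [Module K V]
    (M₁ M₂ : Set V) : Prop :=
  ∃ α : K, α ≠ 0 ∧ (∀ m ∈ M₂, α • m ∈ M₁) ∧ ∀ m ∈ M₁, α • m ∈ M₂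

/-- The locally convex topology on `V` defined by the gauge seminorm of the lattice `M`:
the sets `v + c • M` (`c ≠ 0`) form a basis of this topology. -/
def gaugeTopology (K : Type*) [NormedField K] {V : Type*} [AddCommGroup V] [Module K V]
    (M : Set V) : TopologicalSpace V :=
  TopologicalSpace.generateFrom
    {U : Set V | ∃ (v : V) (c : K), c ≠ 0 ∧ U = {w : V | ∃ m ∈ M, w = v + c • m}}

/-- `K` is discretely valued: the value group of `K^×` is generated by the norm of a
uniformiser. -/
def IsDiscretelyValued (K : Type*) [NormedField K] : Prop :=
  ∃ π : K, 0 < ‖π‖ ∧ ‖π‖ < 1 ∧ ∀ x : K, x ≠ 0 → ∃ n : ℤ, ‖x‖ = ‖π‖ ^ n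

section aux
variable {K : Type*} [NontriviallyNormedField K] {V : Type*} [AddCommGroup V] [Module K V]

lemma lattice_shrink {M : Set V} (hM : IsLatticeIn K M) {c d : K} (hc : c ≠ 0)
    (hd : ‖d‖ ≤ ‖c‖) {m : V} (hm : m ∈ M) : ∃ m' ∈ M, d • m = c • m' := by
  have hc' : 0 < ‖c‖ := norm_pos_iff.mpr hc
  refine ⟨(c⁻¹ * d) • m, hM.2.2.1 _ ?_ _ hm, ?_⟩
  · rw [norm_mul, norm_inv]
    calc ‖c‖⁻¹ * ‖d‖ ≤ ‖c‖⁻¹ * ‖c‖ := by gcongr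
      _ = 1 := inv_mul_cancel₀ hc'.ne'
  · rw [smul_smul, mul_inv_cancel_left₀ hc]

lemma gauge_isOpen_iff {M : Set V} (hM : IsLatticeIn K M) (S : Set V) :
    @IsOpen V (gaugeTopology K M) S ↔ ∀ w ∈ S, ∃ c : K, c ≠ 0 ∧ ∀ m ∈ M, w + c • m ∈ S := by
  constructor
  · intro h
    change TopologicalSpace.GenerateOpen _ S at h
    induction h with
    | basic U hU =>
      rintro w hw
      obtain ⟨v, c, hc, rfl⟩ := hU
      obtain ⟨m₀, hm₀, rfl⟩ := hw
      exact ⟨c, hc, fun m hm => ⟨m₀ + m, hM.2.1 _ hm₀ _ hm, by rw [smul_add, add_assoc]⟩⟩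
    | univ => exact fun w _ => ⟨1, one_ne_zero, fun _ _ => trivial⟩
    | inter U₁ U₂ _ _ ih₁ ih₂ =>
      intro w hw
      obtain ⟨c₁, hc₁, h₁⟩ := ih₁ w hw.1
      obtain ⟨c₂, hc₂, h₂⟩ := ih₂ w hw.2
      rcases le_total ‖c₁‖ ‖c₂‖ with hle | hle
      · refine ⟨c₁, hc₁, fun m hm => ⟨h₁ m hm, ?_⟩⟩
        obtain ⟨m', hm', he⟩ := lattice_shrink hM hc₂ hle hm
        rw [he]; exact h₂ m' hm'
      · refine ⟨c₂, hc₂, fun m hm => ⟨?_, h₂ m hm⟩⟩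
        obtain ⟨m', hm', he⟩ := lattice_shrink hM hc₁ hle hm
        rw [he]; exact h₁ m' hm'
    | sUnion ts hts ih =>
      intro w hw
      obtain ⟨t, ht, hwt⟩ := hw
      obtain ⟨c, hc, h⟩ := ih t ht w hwt
      exact ⟨c, hc, fun m hm => ⟨t, ht, h m hm⟩⟩
  · intro h
    have hS : S = ⋃₀ {U : Set V |
        (∃ (v : V) (c : K), c ≠ 0 ∧ U = {w : V | ∃ m ∈ M, w = v + c • m}) ∧ U ⊆ S} := by
      ext w
      constructor
      · intro hw
        obtain ⟨c, hc, hcw⟩ := h w hw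
        refine ⟨{u : V | ∃ m ∈ M, u = w + c • m}, ⟨⟨w, c, hc, rfl⟩, ?_⟩, ⟨0, hM.1, by simp⟩⟩
        rintro u ⟨m, hm, rfl⟩
        exact hcw m hm
      · rintro ⟨U, ⟨_, hUS⟩, hwU⟩
        exact hUS hwU
    rw [hS]
    exact TopologicalSpace.GenerateOpen.sUnion _ fun U hU =>
      TopologicalSpace.GenerateOpen.basic _ hU.1

end aux

/-- Lemma 6.5.1: a group `G` acting `K`-linearly on a `K`-vector space `V` preserves the
commensurability class of a lattice `M` if and only if every element of `G` acts as a
continuous automorphism of `V` for the topology defined by the gauge seminorm of `M`. -/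
theorem stmt_18 {K : Type*} [NontriviallyNormedField K] [CompleteSpace K]
    [IsUltrametricDist K] (hdv : IsDiscretelyValued K)
    {G V : Type*} [Group G] [AddCommGroup V] [Module K V]
    [DistribMulAction G V] [SMulCommClass G K V]
    (M : Set V) (hM : IsLatticeIn K M) :
    (∀ g : G, AreCommensurable K ((fun v : V => g • v) '' M) M) ↔
      ∀ g : G, @Continuous V V (gaugeTopology K M) (gaugeTopology K M)
        (fun v : V => g • v) := by
  letI : TopologicalSpace V := gaugeTopology K M
  constructor
  · intro hcomm g
    rw [continuous_def]
    intro U hU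
    rw [gauge_isOpen_iff hM] at hU ⊢
    intro w hw
    obtain ⟨c, hc, hcU⟩ := hU (g • w) hw
    obtain ⟨α, hα, _, h2⟩ := hcomm g
    refine ⟨c * α, mul_ne_zero hc hα, fun m hm => ?_⟩
    show g • (w + (c * α) • m) ∈ U
    have : g • (w + (c * α) • m) = g • w + c • (α • (g • m)) := by
      rw [smul_add, smul_comm g ((c : K) * α) m, smul_smul, mul_smul c α (g • m)]
    rw [this]
    exact hcU _ (h2 _ ⟨m, hm, rfl⟩)
  · intro hcont g
    have hMopen : @IsOpen V (gaugeTopology K M) M := by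
      rw [gauge_isOpen_iff hM]
      intro w hw
      exact ⟨1, one_ne_zero, fun m hm => by
        simpa using hM.2.1 _ hw _ hm⟩
    -- c : c • M ⊆ g '' M
    have h1 := (continuous_def.mp (hcont g⁻¹)) M hMopen
    rw [gauge_isOpen_iff hM] at h1
    obtain ⟨c, hc, hc1⟩ := h1 0 (by
      show g⁻¹ • (0 : V) ∈ M
      simpa using hM.1)
    -- c' : ∀ m ∈ M, g • (c' • m) ∈ M
    have h2 := (continuous_def.mp (hcont g)) M hMopen
    rw [gauge_isOpen_iff hM] at h2
    obtain ⟨c', hc', hc2⟩ := h2 0 (by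
      show g • (0 : V) ∈ M
      simpa using hM.1)
    rcases le_total ‖c‖ ‖c'‖ with hle | hle
    · refine ⟨c, hc, fun m hm => ?_, fun m hm => ?_⟩
      · have := hc1 m hm
        simp only [zero_add] at this
        exact ⟨g⁻¹ • (c • m), this, by simp⟩
      · obtain ⟨x, hx, rfl⟩ := hm
        obtain ⟨m', hm', he⟩ := lattice_shrink hM hc' hle hx
        have := hc2 m' hm'
        simp only [zero_add] at this
        have : g • (c • x) ∈ M := by rw [he]; exact this
        rwa [smul_comm g c x] at this
    · refine ⟨c', hc', fun m hm => ?_, fun m hm => ?_⟩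
      · obtain ⟨m', hm', he⟩ := lattice_shrink hM hc hle hm
        have h := hc1 m' hm'
        simp only [zero_add] at h
        refine ⟨g⁻¹ • (c' • m), by rw [he]; exact h, by simp⟩
      · obtain ⟨x, hx, rfl⟩ := hm
        have := hc2 x hx
        simp only [zero_add] at this
        rwa [← smul_comm g c' x]
end

section
/- Let K be a discretely valued complete nonarchimedean field, G a group acting linearly on a K-vector space V, and M a lattice in V. The following are equivalent: (i) there exists a G-invariant lattice commensurable with M; (ii) there exists a G-invariant seminorm on V defining the same topology as the gauge of M; (iii) G acts as an equicontinuous family of operators on V equipped with the gauge topology of M. Moreover, if V is a topological K-vector space, G is compact and acts continu];y on V, and M is an open lattice, then these conditions are equivalent to the continuity of the G-action on V equipped with the gauge topology of M. -/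
/-- The topology on `V` defined by a (nonarchimedean) seminorm `q`. -/
def seminormTopology {V : Type*} [AddCommGroup V] (q : V → ℝ) : TopologicalSpace V :=
  TopologicalSpace.generateFrom
    {U : Set V | ∃ (v : V) (ε : ℝ), 0 < ε ∧ U = {w : V | q (w - v) < ε}}

section

variable (K : Type*) [NormedField K] {G V : Type*} [Group G] [AddCommGroup V] [Module K V]
  [DistribMulAction G V] [SMulCommClass G K V]

/-- Condition (i): there exists a `G`-invariant lattice commensurable with `M`. -/
def HasInvariantCommensurableLattice (M : Set V) : Prop :=
  ∃ N : Set V, IsLatticeIn K N ∧ (∀ (g : G), ∀ v ∈ N, g • v ∈ N) ∧ AreCommensurable K N M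

/-- Condition (ii): there exists a `G`-invariant (nonarchimedean) seminorm on `V` defining
the same topology as the gauge seminorm of `M`. -/
def HasInvariantGaugeSeminorm (M : Set V) : Prop :=
  ∃ q : V → ℝ, (∀ v : V, 0 ≤ q v) ∧ (∀ (c : K) (v : V), q (c • v) = ‖c‖ * q v) ∧
    (∀ v w : V, q (v + w) ≤ max (q v) (q w)) ∧ (∀ (g : G) (v : V), q (g • v) = q v) ∧
    seminormTopology q = gaugeTopology K M

/-- Condition (iii): `G` acts as an equicontinuous family of operators on `V` equipped with
the gauge topology of `M`. -/
def ActsEquicontinuouslyOnGauge (M : Set V) : Prop :=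
  ∀ U ∈ @nhds V (gaugeTopology K M) 0, ∃ U' ∈ @nhds V (gaugeTopology K M) 0,
    ∀ (g : G), ∀ v ∈ U', g • v ∈ U

end


open TopologicalSpace Set Topology
set_option linter.unusedSectionVars false

section Helpers

variable {K : Type*} [NontriviallyNormedField K] {V : Type*} [AddCommGroup V] [Module K V]

/-- The coset `v + c • M`. -/
def cosetOf (v : V) (c : K) (M : Set V) : Set V := {w : V | ∃ m ∈ M, w = v + c • m}

/-- Generic openness criterion for generated topologies. -/

lemma isOpen_generateFrom_of_base {T : Set (Set V)} {U : Set V}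
    (h : ∀ x ∈ U, ∃ B ∈ T, x ∈ B ∧ B ⊆ U) : IsOpen[generateFrom T] U := by
  have hU : U = ⋃₀ {B | B ∈ T ∧ B ⊆ U} := by
    apply subset_antisymm
    · intro x hx
      obtain ⟨B, hBT, hxB, hBU⟩ := h x hx
      exact ⟨B, ⟨hBT, hBU⟩, hxB⟩
    · rintro x ⟨B, ⟨_, hBU⟩, hxB⟩; exact hBU hxB
  rw [hU]
  exact TopologicalSpace.GenerateOpen.sUnion _ fun B hB => .basic B hB.1

variable {M : Set V} (hM : IsLatticeIn K M)
include hM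

lemma lattice_zero : (0:V) ∈ M := hM.1
lemma lattice_add {x y : V} (hx : x ∈ M) (hy : y ∈ M) : x + y ∈ M := hM.2.1 x hx y hy
lemma lattice_smul {c : K} (hc : ‖c‖ ≤ 1) {x : V} (hx : x ∈ M) : c • x ∈ M :=
  hM.2.2.1 c hc x hx

lemma mem_cosetOf_self (v : V) (c : K) : v ∈ cosetOf v c M :=
  ⟨0, lattice_zero hM, by simp⟩

/-- `x ∈ v + cM` implies `x + cM ⊆ v + cM`. -/
lemma cosetOf_subset {v x : V} {c : K} (hx : x ∈ cosetOf v c M) :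
    cosetOf x c M ⊆ cosetOf v c M := by
  obtain ⟨m₀, hm₀, rfl⟩ := hx
  rintro w ⟨m, hm, rfl⟩
  exact ⟨m₀ + m, lattice_add hM hm₀ hm, by rw [smul_add, add_assoc]⟩

/-- Smaller scalar gives smaller coset. -/
lemma cosetOf_mono {c c' : K} (hc : c ≠ 0) (h : ‖c'‖ ≤ ‖c‖) (v : V) :
    cosetOf v c' M ⊆ cosetOf v c M := by
  rintro w ⟨m, hm, rfl⟩
  refine ⟨(c⁻¹ * c') • m, lattice_smul hM ?_ hm, ?_⟩
  · rw [norm_mul, norm_inv]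
    calc ‖c‖⁻¹ * ‖c'‖ ≤ ‖c‖⁻¹ * ‖c‖ := by
          apply mul_le_mul_of_nonneg_left h (by positivity)
      _ = 1 := inv_mul_cancel₀ (norm_ne_zero_iff.2 hc)
  · rw [smul_smul, mul_inv_cancel_left₀ hc]

lemma cosetOf_open {v : V} {c : K} (hc : c ≠ 0) :
    IsOpen[gaugeTopology K M] (cosetOf v c M) := by
  apply isOpen_generateFrom_of_base
  intro x hx
  exact ⟨cosetOf x c M, ⟨x, c, hc, rfl⟩, mem_cosetOf_self hM x c, cosetOf_subset hM hx⟩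

/-- Basis lemma for the gauge topology. -/
lemma gauge_isOpen_iff_s19 {U : Set V} (hU : IsOpen[gaugeTopology K M] U) :
    ∀ x ∈ U, ∃ c : K, c ≠ 0 ∧ cosetOf x c M ⊆ U := by
  induction hU with
  | basic B hB =>
      obtain ⟨v, c, hc, rfl⟩ := hB
      intro x hx
      exact ⟨c, hc, cosetOf_subset hM hx⟩
  | univ => intro x _; exact ⟨1, one_ne_zero, fun _ _ => trivial⟩
  | inter U₁ U₂ h₁ h₂ ih₁ ih₂ =>
      intro x hx
      obtain ⟨c₁, hc₁, hs₁⟩ := ih₁ x hx.1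
      obtain ⟨c₂, hc₂, hs₂⟩ := ih₂ x hx.2
      rcases le_total ‖c₁‖ ‖c₂‖ with h | h
      · exact ⟨c₁, hc₁, fun w hw => ⟨hs₁ hw, hs₂ (cosetOf_mono hM hc₂ h x hw)⟩⟩
      · exact ⟨c₂, hc₂, fun w hw => ⟨hs₁ (cosetOf_mono hM hc₁ h x hw), hs₂ hw⟩⟩
  | sUnion S hS ih =>
      rintro x ⟨B, hB, hxB⟩
      obtain ⟨c, hc, hsub⟩ := ih B hB x hxB
      exact ⟨c, hc, fun w hw => ⟨B, hB, hsub hw⟩⟩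

lemma gauge_mem_nhds_iff {U : Set V} {x : V} :
    U ∈ @nhds V (gaugeTopology K M) x ↔ ∃ c : K, c ≠ 0 ∧ cosetOf x c M ⊆ U := by
  constructor
  · intro hU
    rw [@mem_nhds_iff] at hU
    obtain ⟨O, hOU, hO, hxO⟩ := hU
    obtain ⟨c, hc, hsub⟩ := gauge_isOpen_iff_s19 hM hO x hxO
    exact ⟨c, hc, hsub.trans hOU⟩
  · rintro ⟨c, hc, hsub⟩
    rw [@mem_nhds_iff]
    exact ⟨cosetOf x c M, hsub, cosetOf_open hM hc, mem_cosetOf_self hM x c⟩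

end Helpers

section Seminorm

variable {K : Type*} [NontriviallyNormedField K] {V : Type*} [AddCommGroup V] [Module K V]

/-- Ball of a seminorm. -/
def snBall (q : V → ℝ) (v : V) (ε : ℝ) : Set V := {w : V | q (w - v) < ε}

variable {q : V → ℝ} (hsm : ∀ (c : K) (v : V), q (c • v) = ‖c‖ * q v)
  (htri : ∀ v w : V, q (v + w) ≤ max (q v) (q w))
include hsm

lemma sn_zero : q 0 = 0 := by
  have := hsm (0 : K) (0 : V)
  simpa using this

lemma sn_neg (v : V) : q (-v) = q v := by
  have := hsm (-1 : K) v
  simpa using this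

include htri

lemma sn_sub_le (u v w : V) : q (u - w) ≤ max (q (u - v)) (q (v - w)) := by
  have : u - w = (u - v) + (v - w) := by abel
  rw [this]; exact htri _ _

lemma snBall_subset {v x : V} {ε : ℝ} (hx : x ∈ snBall q v ε) :
    snBall q x ε ⊆ snBall q v ε := by
  intro w hw
  exact lt_of_le_of_lt (sn_sub_le hsm htri w x v) (max_lt hw hx)

lemma mem_snBall_self {x : V} {ε : ℝ} (hε : 0 < ε) : x ∈ snBall q x ε := by
  simp only [snBall, Set.mem_setOf_eq, sub_self, sn_zero hsm]; exact hε

lemma snBall_open {v : V} {ε : ℝ} (hε : 0 < ε) :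
    IsOpen[seminormTopology q] (snBall q v ε) := by
  apply isOpen_generateFrom_of_base
  intro x hx
  exact ⟨snBall q x ε, ⟨x, ε, hε, rfl⟩, mem_snBall_self hsm htri hε, snBall_subset hsm htri hx⟩

lemma seminorm_isOpen_iff {U : Set V} (hU : IsOpen[seminormTopology q] U) :
    ∀ x ∈ U, ∃ ε : ℝ, 0 < ε ∧ snBall q x ε ⊆ U := by
  induction hU with
  | basic B hB =>
      obtain ⟨v, ε, hε, rfl⟩ := hB
      intro x hx
      exact ⟨ε, hε, snBall_subset hsm htri hx⟩
  | univ => intro x _; exact ⟨1, one_pos, fun _ _ => trivial⟩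
  | inter U₁ U₂ h₁ h₂ ih₁ ih₂ =>
      intro x hx
      obtain ⟨ε₁, hε₁, hs₁⟩ := ih₁ x hx.1
      obtain ⟨ε₂, hε₂, hs₂⟩ := ih₂ x hx.2
      refine ⟨min ε₁ ε₂, lt_min hε₁ hε₂, fun w hw => ?_⟩
      have hw' : q (w - x) < min ε₁ ε₂ := hw
      exact ⟨hs₁ (hw'.trans_le (min_le_left _ _)), hs₂ (hw'.trans_le (min_le_right _ _))⟩
  | sUnion S hS ih =>
      rintro x ⟨B, hB, hxB⟩
      obtain ⟨ε, hε, hsub⟩ := ih B hB x hxB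
      exact ⟨ε, hε, fun w hw => ⟨B, hB, hsub hw⟩⟩

lemma seminorm_mem_nhds_iff {U : Set V} {x : V} :
    U ∈ @nhds V (seminormTopology q) x ↔ ∃ ε : ℝ, 0 < ε ∧ snBall q x ε ⊆ U := by
  constructor
  · intro hU
    rw [@mem_nhds_iff] at hU
    obtain ⟨O, hOU, hO, hxO⟩ := hU
    obtain ⟨ε, hε, hsub⟩ := seminorm_isOpen_iff hsm htri hO x hxO
    exact ⟨ε, hε, hsub.trans hOU⟩
  · rintro ⟨ε, hε, hsub⟩
    rw [@mem_nhds_iff]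
    exact ⟨snBall q x ε, hsub, snBall_open hsm htri hε, mem_snBall_self hsm htri hε⟩

end Seminorm

section Gauge

variable {K : Type*} [NontriviallyNormedField K] {V : Type*} [AddCommGroup V] [Module K V]

/-- The gauge (Minkowski functional) of a lattice `N`. -/
noncomputable def latticeGauge (K : Type*) [NontriviallyNormedField K] {V : Type*}
    [AddCommGroup V] [Module K V] (N : Set V) (v : V) : ℝ :=
  sInf {r : ℝ | ∃ α : K, r = ‖α‖ ∧ ∃ n ∈ N, v = α • n}

variable {N : Set V} (hN : IsLatticeIn K N)

/-- The defining set of the gauge. -/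
private def gset (K : Type*) [NontriviallyNormedField K] {V : Type*} [AddCommGroup V]
    [Module K V] (N : Set V) (v : V) : Set ℝ :=
  {r : ℝ | ∃ α : K, r = ‖α‖ ∧ ∃ n ∈ N, v = α • n}

include hN in
lemma gset_nonempty (v : V) : (gset K N v).Nonempty := by
  obtain ⟨c, hc, hcv⟩ := hN.2.2.2 v
  exact ⟨‖c⁻¹‖, c⁻¹, rfl, c • v, hcv, by rw [smul_smul, inv_mul_cancel₀ hc, one_smul]⟩

lemma gset_bddBelow (v : V) : BddBelow (gset K N v) := by
  refine ⟨0, fun r hr => ?_⟩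
  obtain ⟨α, rfl, -⟩ := hr
  exact norm_nonneg α

include hN in
lemma latticeGauge_nonneg (v : V) : 0 ≤ latticeGauge K N v := by
  apply le_csInf (gset_nonempty hN v)
  rintro r ⟨α, rfl, -⟩
  exact norm_nonneg α

lemma latticeGauge_le {v : V} {α : K} {n : V} (hn : n ∈ N) (hv : v = α • n) :
    latticeGauge K N v ≤ ‖α‖ :=
  csInf_le (gset_bddBelow v) ⟨α, rfl, n, hn, hv⟩

include hN in
lemma latticeGauge_lt_iff {v : V} {ε : ℝ} :
    latticeGauge K N v < ε ↔ ∃ α : K, ‖α‖ < ε ∧ ∃ n ∈ N, v = α • n := by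
  have heq : latticeGauge K N v = sInf (gset K N v) := rfl
  rw [heq, csInf_lt_iff (gset_bddBelow v) (gset_nonempty hN v)]
  constructor
  · rintro ⟨r, ⟨α, rfl, n, hn, hv⟩, hr⟩
    exact ⟨α, hr, n, hn, hv⟩
  · rintro ⟨α, hα, n, hn, hv⟩
    exact ⟨‖α‖, ⟨α, rfl, n, hn, hv⟩, hα⟩

include hN in
lemma latticeGauge_zero : latticeGauge K N 0 = 0 := by
  have h1 : latticeGauge K N 0 ≤ ‖(0:K)‖ :=
    latticeGauge_le hN.1 (by rw [zero_smul])
  simpa using le_antisymm (by simpa using h1) (latticeGauge_nonneg hN 0)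

include hN in
lemma latticeGauge_smul_le (c : K) (v : V) :
    latticeGauge K N (c • v) ≤ ‖c‖ * latticeGauge K N v := by
  rcases eq_or_ne c 0 with rfl | hc
  · simp [latticeGauge_zero hN]
  · apply le_of_forall_pos_le_add
    intro ε hε
    have hcn : (0:ℝ) < ‖c‖ := norm_pos_iff.2 hc
    have h := (latticeGauge_lt_iff hN).1
      (show latticeGauge K N v < latticeGauge K N v + ε / ‖c‖ by
        linarith [div_pos hε hcn])
    obtain ⟨α, hα, n, hn, rfl⟩ := h
    have : latticeGauge K N (c • α • n) ≤ ‖c * α‖ :=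
      latticeGauge_le hn (by rw [mul_smul])
    rw [norm_mul] at this
    calc latticeGauge K N (c • α • n) ≤ ‖c‖ * ‖α‖ := this
      _ ≤ ‖c‖ * (latticeGauge K N (α • n) + ε / ‖c‖) :=
          mul_le_mul_of_nonneg_left (le_of_lt hα) (le_of_lt hcn)
      _ = ‖c‖ * latticeGauge K N (α • n) + ε := by
          rw [mul_add, mul_div_cancel₀ _ (ne_of_gt hcn)]

include hN in
lemma latticeGauge_smul (c : K) (v : V) :
    latticeGauge K N (c • v) = ‖c‖ * latticeGauge K N v := by
  rcases eq_or_ne c 0 with rfl | hc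
  · simp [latticeGauge_zero hN]
  · refine le_antisymm (latticeGauge_smul_le hN c v) ?_
    have h := latticeGauge_smul_le hN c⁻¹ (c • v)
    rw [smul_smul, inv_mul_cancel₀ hc, one_smul, norm_inv] at h
    have hcn : (0:ℝ) < ‖c‖ := norm_pos_iff.2 hc
    calc ‖c‖ * latticeGauge K N v ≤ ‖c‖ * (‖c‖⁻¹ * latticeGauge K N (c • v)) :=
          mul_le_mul_of_nonneg_left h (le_of_lt hcn)
      _ = latticeGauge K N (c • v) := by
          rw [← mul_assoc, mul_inv_cancel₀ (ne_of_gt hcn), one_mul]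

include hN in
lemma latticeGauge_add_le (v w : V) :
    latticeGauge K N (v + w) ≤ max (latticeGauge K N v) (latticeGauge K N w) := by
  apply le_of_forall_pos_le_add
  intro ε hε
  obtain ⟨α, hα, n, hn, hv⟩ := (latticeGauge_lt_iff hN).1
    (show latticeGauge K N v < latticeGauge K N v + ε by linarith)
  obtain ⟨β, hβ, m, hm, hw⟩ := (latticeGauge_lt_iff hN).1
    (show latticeGauge K N w < latticeGauge K N w + ε by linarith)
  rcases eq_or_ne α 0 with rfl | hα0
  · have hv0 : v = 0 := by rw [hv, zero_smul]
    subst hv0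
    rw [zero_add]
    have h0 := latticeGauge_zero hN
    calc latticeGauge K N w ≤ max (latticeGauge K N (0:V)) (latticeGauge K N w) :=
          le_max_right _ _
      _ ≤ _ + ε := by linarith
  rcases eq_or_ne β 0 with rfl | hβ0
  · have hw0 : w = 0 := by rw [hw, zero_smul]
    subst hw0
    rw [add_zero]
    calc latticeGauge K N v ≤ max (latticeGauge K N v) (latticeGauge K N (0:V)) :=
          le_max_left _ _
      _ ≤ _ + ε := by linarith
  rcases le_total ‖β‖ ‖α‖ with h | h
  · -- v + w ∈ α N
    have hmem : v + w = α • (n + (α⁻¹ * β) • m) := by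
      rw [smul_add, smul_smul, mul_inv_cancel_left₀ hα0, hv, hw]
    have hin : n + (α⁻¹ * β) • m ∈ N := by
      apply hN.2.1 _ hn
      apply hN.2.2.1 _ _ _ hm
      rw [norm_mul, norm_inv]
      calc ‖α‖⁻¹ * ‖β‖ ≤ ‖α‖⁻¹ * ‖α‖ :=
            mul_le_mul_of_nonneg_left h (by positivity)
        _ = 1 := inv_mul_cancel₀ (norm_ne_zero_iff.2 hα0)
    calc latticeGauge K N (v + w) ≤ ‖α‖ := latticeGauge_le hin hmem
      _ ≤ latticeGauge K N v + ε := le_of_lt hα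
      _ ≤ max (latticeGauge K N v) (latticeGauge K N w) + ε := by
          have := le_max_left (latticeGauge K N v) (latticeGauge K N w); linarith
  · have hmem : v + w = β • ((β⁻¹ * α) • n + m) := by
      rw [smul_add, smul_smul, mul_inv_cancel_left₀ hβ0, hv, hw]
    have hin : (β⁻¹ * α) • n + m ∈ N := by
      refine hN.2.1 _ ?_ _ hm
      apply hN.2.2.1 _ _ _ hn
      rw [norm_mul, norm_inv]
      calc ‖β‖⁻¹ * ‖α‖ ≤ ‖β‖⁻¹ * ‖β‖ :=
            mul_le_mul_of_nonneg_left h (by positivity)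
        _ = 1 := inv_mul_cancel₀ (norm_ne_zero_iff.2 hβ0)
    calc latticeGauge K N (v + w) ≤ ‖β‖ := latticeGauge_le hin hmem
      _ ≤ latticeGauge K N w + ε := le_of_lt hβ
      _ ≤ max (latticeGauge K N v) (latticeGauge K N w) + ε := by
          have := le_max_right (latticeGauge K N v) (latticeGauge K N w); linarith

lemma latticeGauge_invariant {G : Type*} [Group G] [DistribMulAction G V]
    [SMulCommClass G K V] (hinv : ∀ (g : G), ∀ v ∈ N, g • v ∈ N) (g : G) (v : V) :
    latticeGauge K N (g • v) = latticeGauge K N v := by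
  have hset : gset K N (g • v) = gset K N v := by
    ext r
    constructor
    · rintro ⟨α, rfl, n, hn, hv⟩
      refine ⟨α, rfl, g⁻¹ • n, hinv g⁻¹ n hn, ?_⟩
      rw [← smul_comm, ← hv, inv_smul_smul]
    · rintro ⟨α, rfl, n, hn, hv⟩
      exact ⟨α, rfl, g • n, hinv g n hn, by rw [hv, smul_comm]⟩
  exact congrArg sInf hset

end Gauge

section TopEq

variable {K : Type*} [NontriviallyNormedField K] {V : Type*} [AddCommGroup V] [Module K V]
  {M N : Set V} (hM : IsLatticeIn K M) (hN : IsLatticeIn K N)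
  {α₀ : K} (hα₀ : α₀ ≠ 0) (hMN : ∀ m ∈ M, α₀ • m ∈ N) (hNM : ∀ n ∈ N, α₀ • n ∈ M)

include hM hN hα₀ hMN in
lemma snBall_gauge_open (v : V) {ε : ℝ} (hε : 0 < ε) :
    IsOpen[gaugeTopology K M] (snBall (latticeGauge K N) v ε) := by
  set q := latticeGauge K N with hq
  apply isOpen_generateFrom_of_base
  intro x hx
  have hxv : q (x - v) < ε := hx
  have hα₀n : (0:ℝ) < ‖α₀‖ := norm_pos_iff.2 hα₀
  obtain ⟨c, hc0, hc⟩ := NormedField.exists_norm_lt K (mul_pos hε hα₀n)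
  have hc' : c ≠ 0 := norm_pos_iff.1 hc0
  refine ⟨{w : V | ∃ m ∈ M, w = x + c • m}, ⟨x, c, hc', rfl⟩,
    ⟨0, hM.1, by simp⟩, ?_⟩
  rintro w ⟨m, hm, rfl⟩
  show q (x + c • m - v) < ε
  have h1 : q (x + c • m - v) ≤ max (q (x + c • m - x)) (q (x - v)) :=
    sn_sub_le (latticeGauge_smul hN) (latticeGauge_add_le hN) _ _ _
  have h2 : x + c • m - x = c • m := by abel
  rw [h2] at h1
  have h3 : q (c • m) = ‖c‖ * q m := latticeGauge_smul hN c m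
  have h4 : q m ≤ ‖α₀⁻¹‖ :=
    latticeGauge_le (hMN m hm) (by rw [smul_smul, inv_mul_cancel₀ hα₀, one_smul])
  have h5 : q (c • m) < ε := by
    rw [h3, norm_inv] at *
    calc ‖c‖ * q m ≤ ‖c‖ * ‖α₀‖⁻¹ :=
          mul_le_mul_of_nonneg_left h4 (norm_nonneg c)
      _ < ε * ‖α₀‖ * ‖α₀‖⁻¹ := by
          apply mul_lt_mul_of_pos_right hc (by positivity)
      _ = ε := by field_simp
  exact lt_of_le_of_lt h1 (max_lt h5 hxv)

include hM hN hα₀ hNM in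
lemma cosetOf_seminorm_open (v : V) {c : K} (hc : c ≠ 0) :
    IsOpen[seminormTopology (latticeGauge K N)] (cosetOf v c M) := by
  apply isOpen_generateFrom_of_base
  intro x hx
  have hcn : (0:ℝ) < ‖c‖ := norm_pos_iff.2 hc
  have hαn : (0:ℝ) < ‖α₀‖ := norm_pos_iff.2 hα₀
  have hcα : (0:ℝ) < ‖c * α₀‖ := by rw [norm_mul]; exact mul_pos hcn hαn
  refine ⟨{w : V | latticeGauge K N (w - x) < ‖c * α₀‖},
    ⟨x, ‖c * α₀‖, hcα, rfl⟩, ?_, ?_⟩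
  · show latticeGauge K N (x - x) < ‖c * α₀‖
    rw [sub_self, latticeGauge_zero hN]; exact hcα
  · intro w hw
    have hw' : latticeGauge K N (w - x) < ‖c * α₀‖ := hw
    obtain ⟨β, hβ, n, hn, hwx⟩ := (latticeGauge_lt_iff hN).1 hw'
    rw [norm_mul] at hβ
    apply cosetOf_subset hM hx
    refine ⟨(c⁻¹ * β * α₀⁻¹) • (α₀ • n), ?_, ?_⟩
    · apply hM.2.2.1
      · rw [norm_mul, norm_mul, norm_inv, norm_inv]
        have h1 : ‖c‖⁻¹ * ‖β‖ * ‖α₀‖⁻¹ ≤ ‖c‖⁻¹ * (‖c‖ * ‖α₀‖) * ‖α₀‖⁻¹ := by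
          apply mul_le_mul_of_nonneg_right _ (by positivity)
          exact mul_le_mul_of_nonneg_left hβ.le (by positivity)
        have h2 : ‖c‖⁻¹ * (‖c‖ * ‖α₀‖) * ‖α₀‖⁻¹ = 1 := by field_simp
        linarith
      · exact hNM n hn
    · rw [smul_smul, smul_smul]
      have hs : c * (c⁻¹ * β * α₀⁻¹) * α₀ = β := by field_simp
      rw [hs, ← hwx]
      abel

include hM hN hα₀ hMN hNM in
lemma latticeGauge_topology_eq :
    seminormTopology (latticeGauge K N) = gaugeTopology K M := by
  apply le_antisymm
  · rw [gaugeTopology, TopologicalSpace.le_generateFrom_iff_subset_isOpen]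
    rintro U ⟨v, c, hc, rfl⟩
    exact cosetOf_seminorm_open hM hN hα₀ hNM v hc
  · rw [seminormTopology, TopologicalSpace.le_generateFrom_iff_subset_isOpen]
    rintro U ⟨v, ε, hε, rfl⟩
    exact snBall_gauge_open hM hN hα₀ hMN v hε

end TopEq

section Implications

variable {K : Type*} [NontriviallyNormedField K] {G V : Type*} [Group G] [AddCommGroup V]
  [Module K V] [DistribMulAction G V] [SMulCommClass G K V] {M : Set V}

lemma impA (hM : IsLatticeIn K M) :
    HasInvariantCommensurableLattice K (G := G) M →
      HasInvariantGaugeSeminorm K (G := G) M := by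
  rintro ⟨N, hN, hinv, α₀, hα₀, hMN, hNM⟩
  exact ⟨latticeGauge K N, latticeGauge_nonneg hN, latticeGauge_smul hN,
    latticeGauge_add_le hN, latticeGauge_invariant hinv,
    latticeGauge_topology_eq hM hN hα₀ hMN hNM⟩

lemma impB (hM : IsLatticeIn K M) :
    HasInvariantGaugeSeminorm K (G := G) M →
      ActsEquicontinuouslyOnGauge K (G := G) M := by
  rintro ⟨q, hq0, hsm, htri, hinv, heq⟩
  intro U hU
  rw [← heq] at hU
  obtain ⟨ε, hε, hball⟩ := (seminorm_mem_nhds_iff hsm htri).1 hU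
  refine ⟨snBall q 0 ε, ?_, ?_⟩
  · rw [← heq]
    exact (seminorm_mem_nhds_iff hsm htri).2 ⟨ε, hε, subset_rfl⟩
  · intro g v hv
    apply hball
    have hv' : q (v - 0) < ε := hv
    show q (g • v - 0) < ε
    rw [sub_zero] at *
    rw [hinv g v]
    exact hv'

lemma impC (hM : IsLatticeIn K M) :
    ActsEquicontinuouslyOnGauge K (G := G) M →
      HasInvariantCommensurableLattice K (G := G) M := by
  intro hequi
  have hMnhds : M ∈ @nhds V (gaugeTopology K M) 0 := by
    rw [gauge_mem_nhds_iff hM]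
    exact ⟨1, one_ne_zero, by rintro w ⟨m, hm, rfl⟩; simpa using hm⟩
  obtain ⟨U', hU', hGU'⟩ := hequi M hMnhds
  obtain ⟨c₀, hc₀, hc₀U'⟩ := (gauge_mem_nhds_iff hM).1 hU'
  -- shrink c₀ to c with ‖c‖ ≤ 1
  obtain ⟨d, hd0, hd⟩ := NormedField.exists_norm_lt K
    (lt_min one_pos (inv_pos.2 (norm_pos_iff.2 hc₀)))
  have hd1 : ‖d‖ ≤ 1 := ((lt_min_iff.1 hd).1).le
  have hd2 : ‖d‖ < ‖c₀‖⁻¹ := (lt_min_iff.1 hd).2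
  have hdne : d ≠ 0 := norm_pos_iff.1 hd0
  set c := c₀ * d with hc
  have hcne : c ≠ 0 := mul_ne_zero hc₀ hdne
  have hc1 : ‖c‖ ≤ 1 := by
    rw [hc, norm_mul]
    have h := mul_lt_mul_of_pos_left hd2 (norm_pos_iff.2 hc₀)
    rw [mul_inv_cancel₀ (norm_ne_zero_iff.2 hc₀)] at h
    exact h.le
  -- cM ⊆ N := {v | ∀ g, g • v ∈ M}
  have key : ∀ m ∈ M, ∀ g : G, g • (c • m) ∈ M := by
    intro m hm g
    apply hGU'
    apply hc₀U'
    refine ⟨d • m, hM.2.2.1 d hd1 m hm, ?_⟩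
    rw [zero_add, smul_smul, hc]
  refine ⟨{v : V | ∀ g : G, g • v ∈ M}, ⟨?_, ?_, ?_, ?_⟩, ?_, c, hcne, ?_, ?_⟩
  · intro g; rw [smul_zero]; exact hM.1
  · intro x hx y hy g
    rw [smul_add]; exact hM.2.1 _ (hx g) _ (hy g)
  · intro a ha x hx g
    rw [smul_comm]; exact hM.2.2.1 a ha _ (hx g)
  · intro v
    obtain ⟨a, ha, hav⟩ := hM.2.2.2 v
    refine ⟨c * a, mul_ne_zero hcne ha, ?_⟩
    intro g
    have : (c * a) • v = c • (a • v) := by rw [smul_smul]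
    rw [this]
    exact key _ hav g
  · intro g v hv g'
    rw [smul_smul]; exact hv (g' * g)
  · intro m hm g
    exact key m hm g
  · intro n hn
    have hnM : n ∈ M := by simpa using hn 1
    exact hM.2.2.1 c hc1 n hnM

end Implications

section PartD

variable {K : Type*} [NontriviallyNormedField K] {G V : Type*} [Group G] [AddCommGroup V]
  [Module K V] [DistribMulAction G V] [SMulCommClass G K V] {M : Set V}

lemma cosetOf_eq_preimage {z : V} {c : K} (hc : c ≠ 0) :
    cosetOf z c M = {w : V | c⁻¹ • (w - z) ∈ M} := by
  ext w
  constructor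
  · rintro ⟨m, hm, rfl⟩
    show c⁻¹ • (z + c • m - z) ∈ M
    have : z + c • m - z = c • m := by abel
    rw [this, smul_smul, inv_mul_cancel₀ hc, one_smul]
    exact hm
  · intro hw
    exact ⟨c⁻¹ • (w - z), hw, by rw [smul_smul, mul_inv_cancel₀ hc, one_smul]; abel⟩

lemma impD1 (hM : IsLatticeIn K M) (tV : TopologicalSpace V) (tG : TopologicalSpace G)
    (hTA : @IsTopologicalAddGroup V tV _) (hSM : @ContinuousSMul K V _ _ tV)
    (hact : @Continuous (G × V) V (@instTopologicalSpaceProd G V tG tV) tV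
      (fun p : G × V => p.1 • p.2))
    (hMopen : @IsOpen V tV M) :
    HasInvariantCommensurableLattice K (G := G) M →
      @Continuous (G × V) V (@instTopologicalSpaceProd G V tG (gaugeTopology K M))
        (gaugeTopology K M) (fun p : G × V => p.1 • p.2) := by
  rintro ⟨N, hN, hinv, α, hα, hMN, hNM⟩
  rw [gaugeTopology, continuous_generateFrom_iff]
  rintro U ⟨v', c, hc, rfl⟩
  refine (@isOpen_iff_forall_mem_open (G × V)
    (@instTopologicalSpaceProd G V tG (gaugeTopology K M)) _).mpr ?_
  rintro ⟨g₀, v₀⟩ hgv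
  simp only [Set.mem_preimage] at hgv
  have hcoset_open : ∀ z : V, @IsOpen V tV (cosetOf z c M) := by
    letI := tV
    intro z
    rw [cosetOf_eq_preimage hc]
    have hcont2 : Continuous fun w : V => c⁻¹ • (w - z) :=
      (continuous_id.sub continuous_const).const_smul c⁻¹
    exact hcont2.isOpen_preimage M hMopen
  set W : Set G := (fun g : G => g • v₀) ⁻¹' (cosetOf (g₀ • v₀) c M) with hW
  have hWopen : @IsOpen G tG W := by
    letI := tV; letI := tG
    have horb : Continuous fun g : G => g • v₀ :=
      hact.comp (continuous_id.prodMk continuous_const)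
    exact horb.isOpen_preimage _ (hcoset_open (g₀ • v₀))
  have hg₀W : g₀ ∈ W := mem_cosetOf_self hM (g₀ • v₀) c
  set B : Set V := cosetOf v₀ (c * α * α) M with hB
  have hBopen : IsOpen[gaugeTopology K M] B :=
    cosetOf_open hM (mul_ne_zero (mul_ne_zero hc hα) hα)
  refine ⟨W ×ˢ B, ?_, ?_, ⟨hg₀W, mem_cosetOf_self hM v₀ _⟩⟩
  · rintro ⟨g, v⟩ ⟨hgW, hvB⟩
    show g • v ∈ cosetOf v' c M
    obtain ⟨m, hm, rfl⟩ := hvB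
    obtain ⟨m₂, hm₂, hgv₀⟩ := hgW
    have hgv₀' : g • v₀ = g₀ • v₀ + c • m₂ := hgv₀
    apply cosetOf_subset hM hgv
    have hsc : g • ((c * α * α) • m) = c • (α • (g • (α • m))) := by
      rw [smul_comm g α m, smul_comm g (c * α * α) m]
      rw [smul_smul, smul_smul]
    have key : g • (v₀ + (c * α * α) • m) = g₀ • v₀ + c • (m₂ + α • (g • (α • m))) := by
      calc g • (v₀ + (c * α * α) • m) = g • v₀ + g • ((c * α * α) • m) := smul_add g _ _
        _ = (g₀ • v₀ + c • m₂) + c • (α • (g • (α • m))) := by rw [hgv₀', hsc]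
        _ = g₀ • v₀ + c • (m₂ + α • (g • (α • m))) := by rw [smul_add, add_assoc]
    refine ⟨m₂ + α • (g • (α • m)), hM.2.1 _ hm₂ _ ?_, key⟩
    exact hNM _ (hinv g _ (hMN m hm))
  · exact @IsOpen.prod G V tG (gaugeTopology K M) _ _ hWopen hBopen

end PartD

section PartD2

variable {K : Type*} [NontriviallyNormedField K] {G V : Type*} [Group G] [AddCommGroup V]
  [Module K V] [DistribMulAction G V] [SMulCommClass G K V] {M : Set V}

/-- Shrink a coefficient to one of norm at most 1 keeping the coset smaller. -/
lemma shrink_coeff (c : K) (hc : c ≠ 0) :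
    ∃ c' : K, c' ≠ 0 ∧ ‖c'‖ ≤ 1 ∧ ‖c'‖ ≤ ‖c‖ := by
  obtain ⟨d, hd0, hd⟩ := NormedField.exists_norm_lt K
    (lt_min one_pos (inv_pos.2 (norm_pos_iff.2 hc)))
  have hd1 : ‖d‖ ≤ 1 := ((lt_min_iff.1 hd).1).le
  have hd2 : ‖d‖ < ‖c‖⁻¹ := (lt_min_iff.1 hd).2
  refine ⟨c * d, mul_ne_zero hc (norm_pos_iff.1 hd0), ?_, ?_⟩
  · rw [norm_mul]
    have h := mul_lt_mul_of_pos_left hd2 (norm_pos_iff.2 hc)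
    rw [mul_inv_cancel₀ (norm_ne_zero_iff.2 hc)] at h
    exact h.le
  · rw [norm_mul]
    calc ‖c‖ * ‖d‖ ≤ ‖c‖ * 1 := mul_le_mul_of_nonneg_left hd1 (norm_nonneg c)
      _ = ‖c‖ := mul_one _

lemma impD2 (hM : IsLatticeIn K M) (tG : TopologicalSpace G) (hCG : @CompactSpace G tG)
    (hcont : @Continuous (G × V) V (@instTopologicalSpaceProd G V tG (gaugeTopology K M))
      (gaugeTopology K M) (fun p : G × V => p.1 • p.2)) :
    ActsEquicontinuouslyOnGauge K (G := G) M := by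
  classical
  intro U hU
  obtain ⟨c, hc, hcU⟩ := (gauge_mem_nhds_iff hM).1 hU
  have hP : @IsOpen (G × V) (@instTopologicalSpaceProd G V tG (gaugeTopology K M))
      ((fun p : G × V => p.1 • p.2) ⁻¹' (cosetOf (0:V) c M)) :=
    continuous_def.mp hcont _ (cosetOf_open hM hc)
  have H : ∀ g : G, ∃ (W : Set G) (c' : K), @IsOpen G tG W ∧ g ∈ W ∧ c' ≠ 0 ∧ ‖c'‖ ≤ 1 ∧
      ∀ g' ∈ W, ∀ v ∈ cosetOf (0:V) c' M, g' • v ∈ cosetOf (0:V) c M := by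
    intro g
    have hmem : (g, (0:V)) ∈ (fun p : G × V => p.1 • p.2) ⁻¹' (cosetOf (0:V) c M) := by
      show g • (0:V) ∈ cosetOf (0:V) c M
      rw [smul_zero]
      exact mem_cosetOf_self hM 0 c
    obtain ⟨W, B, hWopen, hBopen, hgW, h0B, hsub⟩ :=
      (@isOpen_prod_iff G V tG (gaugeTopology K M) _).1 hP g 0 hmem
    obtain ⟨c₁, hc₁, hc₁B⟩ := gauge_isOpen_iff_s19 hM hBopen 0 h0B
    obtain ⟨c', hc'ne, hc'1, hc'le⟩ := shrink_coeff c₁ hc₁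
    refine ⟨W, c', hWopen, hgW, hc'ne, hc'1, ?_⟩
    intro g' hg' v hv
    have hvB : v ∈ B := hc₁B (cosetOf_mono hM hc₁ hc'le 0 hv)
    exact hsub (show (g', v) ∈ W ×ˢ B from ⟨hg', hvB⟩)
  choose W c' hWopen hgW hc'ne hc'1 hsafe using H
  have hcover : (Set.univ : Set G) ⊆ ⋃ g, W g := fun g _ => Set.mem_iUnion.2 ⟨g, hgW g⟩
  obtain ⟨t, ht⟩ := (@isCompact_univ G tG hCG).elim_finite_subcover W hWopen hcover
  rcases Finset.eq_empty_or_nonempty t with rfl | hte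
  · -- impossible unless G is empty; but G is a group hence nonempty
    exfalso
    have := ht (Set.mem_univ (1 : G))
    simpa using this
  set cstar : K := ∏ g ∈ t, c' g with hcstar
  have hcstarne : cstar ≠ 0 := Finset.prod_ne_zero_iff.2 fun g _ => hc'ne g
  refine ⟨cosetOf (0:V) cstar M, (gauge_mem_nhds_iff hM).2 ⟨cstar, hcstarne, subset_rfl⟩, ?_⟩
  intro g v hv
  obtain ⟨g₀, hg₀W⟩ := Set.mem_iUnion.1 (ht (Set.mem_univ g))
  obtain ⟨hg₀t, hgW₀⟩ := Set.mem_iUnion.1 hg₀W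
  have hnorm : ‖cstar‖ ≤ ‖c' g₀‖ := by
    rw [hcstar, ← Finset.mul_prod_erase t c' hg₀t, norm_mul]
    calc ‖c' g₀‖ * ‖∏ x ∈ t.erase g₀, c' x‖ ≤ ‖c' g₀‖ * 1 := by
          apply mul_le_mul_of_nonneg_left _ (norm_nonneg _)
          rw [norm_prod]
          exact Finset.prod_le_one (fun i _ => norm_nonneg _) (fun i _ => hc'1 i)
      _ = ‖c' g₀‖ := mul_one _
  have hv' : v ∈ cosetOf (0:V) (c' g₀) M := cosetOf_mono hM (hc'ne g₀) hnorm 0 hv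
  exact hcU (hsafe g₀ g hgW₀ v hv')

end PartD2
/-- Proposition 6.5.2 and Lemma 6.5.3: for a group `G` acting `K`-linearly on a `K`-vector
space `V` over a discretely valued complete nonarchimedean field, and a lattice `M` in `V`,
the following are equivalent: (i) there is a `G`-invariant lattice commensurable with `M`;
(ii) there is a `G`-invariant seminorm defining the gauge topology of `M`; (iii) `G` acts
equicontinuously for the gauge topology of `M`.  Moreover, if `V` is a topological
`K`-vector space, `G` is a compact topological group acting continuously on `V`, and `M` is
open, then these conditions are equivalent to the joint continuity of the `G`-action on `V`
equipped with the gauge topology of `M`. -/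
theorem stmt_19 {K : Type*} [NontriviallyNormedField K] [CompleteSpace K]
    [IsUltrametricDist K]
    (hdv : ∃ π : K, 0 < ‖π‖ ∧ ‖π‖ < 1 ∧ ∀ x : K, x ≠ 0 → ∃ n : ℤ, ‖x‖ = ‖π‖ ^ n)
    {G V : Type*} [Group G] [AddCommGroup V] [Module K V]
    [DistribMulAction G V] [SMulCommClass G K V]
    (M : Set V) (hM : IsLatticeIn K M) :
    (HasInvariantCommensurableLattice K (G := G) M ↔
        HasInvariantGaugeSeminorm K (G := G) M) ∧
    (HasInvariantGaugeSeminorm K (G := G) M ↔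
        ActsEquicontinuouslyOnGauge K (G := G) M) ∧
    (∀ (tV : TopologicalSpace V) (tG : TopologicalSpace G),
      @IsTopologicalGroup G tG _ → @CompactSpace G tG →
      @IsTopologicalAddGroup V tV _ → @ContinuousSMul K V _ _ tV →
      @Continuous (G × V) V (@instTopologicalSpaceProd G V tG tV) tV
        (fun p : G × V => p.1 • p.2) →
      @IsOpen V tV M →
      (HasInvariantCommensurableLattice K (G := G) M ↔
        @Continuous (G × V) V (@instTopologicalSpaceProd G V tG (gaugeTopology K M))
          (gaugeTopology K M) (fun p : G × V => p.1 • p.2))) := by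
  refine ⟨⟨impA hM, fun h => impC hM (impB hM h)⟩,
    ⟨impB hM, fun h => impA hM (impC hM h)⟩, ?_⟩
  intro tV tG hTG hCG hTA hSM hact hMopen
  exact ⟨fun h => impD1 hM tV tG hTA hSM hact hMopen h,
    fun hcont => impC hM (impD2 hM tG hCG hcont)⟩
end
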